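/- arXiv:2503.11148 — 4 statements merged into one kernel-verified Lean document; each statement's English description precedes it below -/
import Mathlib

section
/- Let n ≥ 1 and j ∈ {1,…,n}. For every v ∈ ℝⁿ with v ≠ 0, the integral over the unit sphere S^{n−1} (with respect to its surface measure σ) satisfies ∫_{S^{n−1}} θ_j · sgn(⟨θ, v⟩) dσ(θ) = (2 π^{(n−1)/2} / Γ((n+1)/2)) · v_j/|v|. -/
open MeasureTheory Filter Topology Set Metric
open scoped Real ENNReal RealInnerProductSpace

lemma aux_sign_mul_pos {c : ℝ} (hc : 0 < c) (t : ℝ) :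
    Real.sign (c * t) = Real.sign t := by
  rcases lt_trichotomy t 0 with h | h | h
  · rw [Real.sign_of_neg h, Real.sign_of_neg (by nlinarith)]
  · simp [h, Real.sign_zero]
  · rw [Real.sign_of_pos h, Real.sign_of_pos (by positivity)]

lemma aux_mul_sign (x : ℝ) : x * Real.sign x = |x| := by
  rcases lt_trichotomy x 0 with h | h | h
  · rw [Real.sign_of_neg h, abs_of_neg h]; ring
  · simp [h]
  · rw [Real.sign_of_pos h, abs_of_pos h]; ring

lemma aux_measurable_sign : Measurable Real.sign := by
  unfold Real.sign
  exact Measurable.ite (measurableSet_lt measurable_id' measurable_const) measurable_const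
    (Measurable.ite (measurableSet_lt measurable_const measurable_id') measurable_const
      measurable_const)

lemma aux_int_exp : ∫ x : ℝ, Real.exp (-x ^ 2) = Real.sqrt Real.pi := by
  simpa using integral_gaussian 1

lemma aux_integrable_exp : Integrable (fun x : ℝ => Real.exp (-x ^ 2)) := by
  simpa using integrable_exp_neg_mul_sq (one_pos)

lemma aux_integrable_mul_exp : Integrable (fun x : ℝ => x * Real.exp (-x ^ 2)) := by
  simpa using integrable_mul_exp_neg_mul_sq (one_pos)

lemma aux_integrable_sign_exp :
    Integrable (fun x : ℝ => Real.sign x * Real.exp (-x ^ 2)) := by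
  refine aux_integrable_exp.mono' ?_ ?_
  · exact (aux_measurable_sign.mul (by fun_prop)).aestronglyMeasurable
  · refine Filter.Eventually.of_forall fun x => ?_
    rw [norm_mul, Real.norm_eq_abs, Real.norm_eq_abs, abs_of_pos (Real.exp_pos _)]
    rcases Real.sign_apply_eq x with h | h | h <;>
      simp [h] <;> positivity

lemma aux_integrable_abs_exp :
    Integrable (fun x : ℝ => x * (Real.sign x * Real.exp (-x ^ 2))) := by
  refine aux_integrable_mul_exp.abs.congr (Filter.Eventually.of_forall fun x => ?_)
  show |x * Real.exp (-x ^ 2)| = _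
  rw [abs_mul, abs_of_pos (Real.exp_pos _), ← aux_mul_sign]; ring

lemma aux_int_mul_exp : ∫ x : ℝ, x * Real.exp (-x ^ 2) = 0 := by
  have h2 : (∫ x : ℝ, -x * Real.exp (-(-x) ^ 2)) = ∫ x : ℝ, x * Real.exp (-x ^ 2) :=
    integral_neg_eq_self (fun x : ℝ => x * Real.exp (-x ^ 2)) volume
  have h3 : (∫ x : ℝ, -x * Real.exp (-(-x) ^ 2)) = -∫ x : ℝ, x * Real.exp (-x ^ 2) := by
    rw [← integral_neg]
    congr 1; ext x; rw [neg_sq]; ring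
  linarith

lemma aux_int_Ioi_pow (m : ℕ) :
    ∫ x in Ioi (0:ℝ), x ^ m * Real.exp (-x ^ 2)
      = (1 / 2) * Real.Gamma (((m : ℝ) + 1) / 2) := by
  have h := integral_rpow_mul_exp_neg_rpow (p := 2) (q := (m : ℝ)) two_pos
    (lt_of_lt_of_le neg_one_lt_zero (Nat.cast_nonneg m))
  rw [← h]
  refine (setIntegral_congr_fun measurableSet_Ioi fun x hx => ?_).symm
  rw [Real.rpow_natCast x m, Real.rpow_two]

lemma aux_int_abs_exp : ∫ x : ℝ, x * (Real.sign x * Real.exp (-x ^ 2)) = 1 := by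
  have h : (fun x : ℝ => x * (Real.sign x * Real.exp (-x ^ 2)))
      = fun x : ℝ => |x| * Real.exp (-|x| ^ 2) := by
    ext x; rw [sq_abs, ← aux_mul_sign]; ring
  rw [h, integral_comp_abs (f := fun x => x * Real.exp (-x ^ 2))]
  have := aux_int_Ioi_pow 1
  simp only [pow_one, Nat.cast_one] at this
  rw [this]
  norm_num [Real.Gamma_one]

lemma aux_gauss (n : ℕ) (hn : 1 ≤ n) (j : Fin n) (v : EuclideanSpace ℝ (Fin n)) (hv : v ≠ 0) :
    ∫ x : EuclideanSpace ℝ (Fin n),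
        (x j) * Real.sign (inner ℝ x v : ℝ) * Real.exp (-‖x‖ ^ 2)
      = Real.pi ^ (((n : ℝ) - 1) / 2) * (v j / ‖v‖) := by
  classical
  set i0 : Fin n := ⟨0, hn⟩ with hi0
  have hvn : ‖v‖ ≠ 0 := norm_ne_zero_iff.mpr hv
  have hvpos : 0 < ‖v‖ := norm_pos_iff.mpr hv
  set u : EuclideanSpace ℝ (Fin n) := ‖v‖⁻¹ • v with hu_def
  have hu : ‖u‖ = 1 := by
    rw [hu_def, norm_smul, norm_inv, norm_norm, inv_mul_cancel₀ hvn]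
  have horth : Orthonormal ℝ (Set.restrict {i0} (fun _ : Fin n => u)) := by
    constructor
    · intro i; exact hu
    · intro i k hik; exact absurd (Subsingleton.elim i k) hik
  obtain ⟨b, hb⟩ := horth.exists_orthonormalBasis_extension_of_card_eq
    (by simp [finrank_euclideanSpace_fin])
  have hbu : b i0 = u := hb i0 rfl
  set w : EuclideanSpace ℝ (Fin n) := b.repr (EuclideanSpace.single j (1:ℝ)) with hw_def
  -- change of variables via the orthonormal basis
  have hcov := (b.measurePreserving_measurableEquiv.symm).integral_comp'
    (fun x : EuclideanSpace ℝ (Fin n) =>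
      (x j) * Real.sign (inner ℝ x v : ℝ) * Real.exp (-‖x‖ ^ 2))
  rw [← hcov]
  have hme : ∀ y : EuclideanSpace ℝ (Fin n), (b.measurableEquiv.symm y) = b.repr.symm y :=
    fun y => rfl
  have hpoint : ∀ y : EuclideanSpace ℝ (Fin n),
      ((b.measurableEquiv.symm y) j) * Real.sign (inner ℝ (b.measurableEquiv.symm y) v : ℝ)
          * Real.exp (-‖b.measurableEquiv.symm y‖ ^ 2)
        = (∑ k, y k * w k) * Real.sign (y i0) * Real.exp (-‖y‖ ^ 2) := by
    intro y
    rw [hme]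
    have h1 : (b.repr.symm y : EuclideanSpace ℝ (Fin n)) j = ∑ k, y k * w k := by
      have e1 : (b.repr.symm y : EuclideanSpace ℝ (Fin n)) j
          = (inner ℝ (b.repr.symm y) (EuclideanSpace.single j (1:ℝ)) : ℝ) := by
        rw [EuclideanSpace.inner_single_right]; simp
      rw [e1, ← LinearIsometryEquiv.inner_map_map b.repr,
        LinearIsometryEquiv.apply_symm_apply, ← hw_def, PiLp.inner_apply]
      simp [RCLike.inner_apply]; exact Finset.sum_congr rfl fun _ _ => mul_comm _ _
    have h2 : (inner ℝ (b.repr.symm y) v : ℝ) = ‖v‖ * y i0 := by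
      have hv_eq : v = ‖v‖ • u := by
        rw [hu_def, smul_smul, mul_inv_cancel₀ hvn, one_smul]
      have e2 : (inner ℝ (b.repr.symm y) v : ℝ) = (inner ℝ y (b.repr v) : ℝ) := by
        rw [← LinearIsometryEquiv.inner_map_map b.repr, LinearIsometryEquiv.apply_symm_apply]
      have e3 : b.repr v = ‖v‖ • EuclideanSpace.single i0 (1:ℝ) := by
        conv_lhs => rw [hv_eq]
        rw [LinearIsometryEquiv.map_smul, ← hbu, b.repr_self]
      rw [e2, e3, real_inner_smul_right, EuclideanSpace.inner_single_right]
      simp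
    have h3 : ‖(b.repr.symm y : EuclideanSpace ℝ (Fin n))‖ = ‖y‖ :=
      b.repr.symm.norm_map y
    rw [h1, h2, h3, aux_sign_mul_pos hvpos]
  rw [funext hpoint]
  -- transfer to the product measure on `Fin n → ℝ`
  have hpi := ((EuclideanSpace.volume_preserving_symm_measurableEquiv_toLp (ι := Fin n)).symm (MeasurableEquiv.toLp 2 (Fin n → ℝ)).symm).integral_comp'
    (fun y : EuclideanSpace ℝ (Fin n) =>
      (∑ k, y k * w k) * Real.sign (y i0) * Real.exp (-‖y‖ ^ 2))
  rw [← hpi]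
  have hnorm : ∀ y : EuclideanSpace ℝ (Fin n), ‖y‖ ^ 2 = ∑ i, (y i) ^ 2 := by
    intro y
    rw [EuclideanSpace.norm_eq, Real.sq_sqrt (by positivity)]
    simp [Real.norm_eq_abs, sq_abs]
  -- the coordinate functions
  set gg : Fin n → Fin n → ℝ → ℝ := fun k i t =>
    (if i = k then t else 1) * ((if i = i0 then Real.sign t else 1) * Real.exp (-t ^ 2))
    with hgg
  have hpoint2 : ∀ z : Fin n → ℝ,
      (fun y : EuclideanSpace ℝ (Fin n) =>
        (∑ k, y k * w k) * Real.sign (y i0) * Real.exp (-‖y‖ ^ 2))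
        ((MeasurableEquiv.toLp 2 (Fin n → ℝ)).symm.symm z)
      = ∑ k, w k * ∏ i, gg k i (z i) := by
    intro z
    have hz : ∀ i, ((MeasurableEquiv.toLp 2 (Fin n → ℝ)).symm.symm z) i = z i := fun _ => rfl
    simp only [hz, hnorm]
    rw [← Finset.sum_neg_distrib, Real.exp_sum, Finset.sum_mul, Finset.sum_mul]
    refine Finset.sum_congr rfl fun k _ => ?_
    rw [hgg]
    simp only []
    rw [Finset.prod_mul_distrib, Finset.prod_mul_distrib]
    simp only [Finset.prod_ite_eq', Finset.mem_univ, if_true]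
    ring
  rw [funext hpoint2]
  have hgint : ∀ k i, Integrable (gg k i) := by
    intro k i
    simp only [hgg]
    by_cases h1 : i = k
    · by_cases h2 : i = i0
      · simp only [if_pos h1, if_pos h2]; exact aux_integrable_abs_exp
      · simp only [if_pos h1, if_neg h2, one_mul]; exact aux_integrable_mul_exp
    · by_cases h2 : i = i0
      · simp only [if_neg h1, if_pos h2, one_mul]; exact aux_integrable_sign_exp
      · simp only [if_neg h1, if_neg h2, one_mul]; exact aux_integrable_exp
  rw [integral_finset_sum (μ := volume) Finset.univ (fun k _ =>
    ((Integrable.fintype_prod (fun i => hgint k i)).const_mul (w k)))]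
  have hval : ∀ k, (∫ z : Fin n → ℝ, ∏ i, gg k i (z i))
      = if k = i0 then Real.pi ^ (((n : ℝ) - 1) / 2) else 0 := by
    intro k
    rw [MeasureTheory.integral_fintype_prod_volume_eq_prod (ι := Fin n) (gg k)]
    by_cases hk : k = i0
    · rw [if_pos hk, Fintype.prod_eq_mul_prod_compl k]
      have hk1 : ∫ t : ℝ, gg k k t = 1 := by
        simp only [hgg, if_pos rfl, if_pos hk]
        exact aux_int_abs_exp
      have hk2 : ∀ i ∈ ({k}ᶜ : Finset (Fin n)), (∫ t : ℝ, gg k i t) = Real.sqrt Real.pi := by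
        intro i hi
        have hik : i ≠ k := by simpa using hi
        have hik0 : i ≠ i0 := fun h => hik (h.trans hk.symm)
        simp only [hgg, if_neg hik, if_neg hik0, one_mul]
        exact aux_int_exp
      rw [hk1, Finset.prod_congr rfl hk2, Finset.prod_const, one_mul]
      have hcard : ({k}ᶜ : Finset (Fin n)).card = n - 1 := by
        rw [Finset.card_compl, Finset.card_singleton, Fintype.card_fin]
      rw [hcard, Real.sqrt_eq_rpow, ← Real.rpow_natCast (Real.pi ^ ((1:ℝ)/2)) (n-1),
        ← Real.rpow_mul Real.pi_nonneg]
      congr 1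
      rw [Nat.cast_sub hn, Nat.cast_one]
      ring
    · rw [if_neg hk]
      refine Finset.prod_eq_zero (Finset.mem_univ k) ?_
      have hki : ¬ (k = i0) := hk
      simp only [hgg, if_pos rfl, if_neg hki, one_mul]
      exact aux_int_mul_exp
  simp only [integral_const_mul, hval, mul_ite, mul_zero]
  rw [Finset.sum_ite_eq' Finset.univ i0 (fun k => w k * Real.pi ^ (((n : ℝ) - 1) / 2)),
    if_pos (Finset.mem_univ i0)]
  have hwi0 : w i0 = ‖v‖⁻¹ * v j := by
    rw [hw_def, b.repr_apply_apply, hbu, hu_def]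
    rw [EuclideanSpace.inner_single_right]
    simp [PiLp.smul_apply, mul_comm]
  rw [hwi0, div_eq_inv_mul]
  ring

local notation "E" n => EuclideanSpace ℝ (Fin n)

lemma aux_polar (n : ℕ) (hn : 1 ≤ n) (j : Fin n) (v : EuclideanSpace ℝ (Fin n)) :
    ∫ x : EuclideanSpace ℝ (Fin n),
        (x j) * Real.sign (inner ℝ x v : ℝ) * Real.exp (-‖x‖ ^ 2)
      = (∫ θ : sphere (0 : EuclideanSpace ℝ (Fin n)) 1,
            ((θ : EuclideanSpace ℝ (Fin n)) j) *
              Real.sign (inner ℝ (θ : EuclideanSpace ℝ (Fin n)) v : ℝ)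
          ∂((volume : Measure (EuclideanSpace ℝ (Fin n))).toSphere))
        * ((1 / 2) * Real.Gamma (((n : ℝ) + 1) / 2)) := by
  classical
  set f : (E n) → ℝ := fun x => (x j) * Real.sign (inner ℝ x v : ℝ) * Real.exp (-‖x‖ ^ 2) with hf
  have hdim : Module.finrank ℝ (E n) = n := finrank_euclideanSpace_fin
  haveI : Nontrivial (E n) := by
    refine nontrivial_of_ne (EuclideanSpace.single j 1) 0 fun h => ?_
    simpa [EuclideanSpace.single_apply] using congrArg (· j) h
  have step1 : ∫ x : (E n), f x
      = ∫ x : ({(0 : E n)}ᶜ : Set (E n)), f x ∂(volume.comap Subtype.val) := by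
    rw [integral_subtype_comap (measurableSet_singleton (0 : E n)).compl f,
      MeasureTheory.restrict_compl_singleton]
  have step2 := ((volume : Measure (E n)).measurePreserving_homeomorphUnitSphereProd).integral_comp
    (Homeomorph.measurableEmbedding _)
    (fun z : sphere (0 : E n) 1 × Ioi (0:ℝ) =>
      f ((((homeomorphUnitSphereProd (E n)).symm z) : ({(0 : E n)}ᶜ : Set (E n))) : E n))
  simp only [Homeomorph.symm_apply_apply] at step2
  rw [step1, step2]
  have step3 : (fun z : sphere (0 : E n) 1 × Ioi (0:ℝ) =>
      f ((((homeomorphUnitSphereProd (E n)).symm z) : ({(0 : E n)}ᶜ : Set (E n))) : E n))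
      = fun z => (((z.1 : E n) j) * Real.sign (inner ℝ (z.1 : E n) v : ℝ)) *
          ((z.2 : ℝ) * Real.exp (-(z.2 : ℝ) ^ 2)) := by
    ext z
    obtain ⟨⟨θ, hθ⟩, ⟨r, hr⟩⟩ := z
    rw [mem_sphere_zero_iff_norm] at hθ
    rw [mem_Ioi] at hr
    simp only [homeomorphUnitSphereProd_symm_apply_coe, hf]
    have h1 : ((r • θ : E n) j) = r * θ j := rfl
    have h2 : (inner ℝ (r • θ : E n) v : ℝ) = r * inner ℝ θ v := real_inner_smul_left θ v r
    have h3 : ‖r • θ‖ = r := by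
      rw [norm_smul, hθ, Real.norm_eq_abs, abs_of_pos hr, mul_one]
    rw [h1, h2, h3, aux_sign_mul_pos hr]
    ring
  rw [step3, integral_prod_mul (μ := (volume : Measure (E n)).toSphere)
    (ν := Measure.volumeIoiPow (Module.finrank ℝ (E n) - 1))
    (fun θ : sphere (0 : E n) 1 => ((θ : E n) j) * Real.sign (inner ℝ (θ : E n) v : ℝ))
    (fun r : Ioi (0:ℝ) => (r : ℝ) * Real.exp (-(r : ℝ) ^ 2))]
  congr 1
  rw [hdim]
  -- radial integral
  simp only [Measure.volumeIoiPow, ENNReal.ofReal]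
  rw [integral_withDensity_eq_integral_smul
    ((measurable_subtype_coe.pow_const _).real_toNNReal)
    (fun r : Ioi (0:ℝ) => (r : ℝ) * Real.exp (-(r : ℝ) ^ 2)),
    integral_subtype_comap measurableSet_Ioi
      (fun a : ℝ => Real.toNNReal (a ^ (n-1)) • (a * Real.exp (-a ^ 2)))]
  rw [setIntegral_congr_fun measurableSet_Ioi
    (g := fun x : ℝ => x ^ n * Real.exp (-x ^ 2)) (fun x hx => by
      simp only [NNReal.smul_def, Real.coe_toNNReal _ (pow_nonneg (le_of_lt hx) (n-1)), smul_eq_mul]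
      rw [← mul_assoc, ← pow_succ, Nat.sub_add_cancel hn])]
  exact aux_int_Ioi_pow n


/-- For `v ≠ 0` in `ℝⁿ`, the integral over the unit sphere (with respect
to its surface measure) satisfies
`∫_{S^{n-1}} θⱼ sgn⟨θ, v⟩ dσ(θ) = (2 π^{(n-1)/2} / Γ((n+1)/2)) vⱼ/‖v‖`. -/
theorem sphere_integral_sign_inner (n : ℕ) (hn : 1 ≤ n) (j : Fin n)
    (v : EuclideanSpace ℝ (Fin n)) (hv : v ≠ 0) :
    ∫ θ : Metric.sphere (0 : EuclideanSpace ℝ (Fin n)) 1,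
        ((θ : EuclideanSpace ℝ (Fin n)) j) *
          Real.sign (inner ℝ (θ : EuclideanSpace ℝ (Fin n)) v : ℝ)
        ∂((volume : Measure (EuclideanSpace ℝ (Fin n))).toSphere)
      = 2 * Real.pi ^ (((n : ℝ) - 1) / 2) / Real.Gamma (((n : ℝ) + 1) / 2) * (v j / ‖v‖) := by
  have hG : 0 < Real.Gamma (((n : ℝ) + 1) / 2) := Real.Gamma_pos_of_pos (by positivity)
  have key : (∫ θ : Metric.sphere (0 : EuclideanSpace ℝ (Fin n)) 1,
        ((θ : EuclideanSpace ℝ (Fin n)) j) *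
          Real.sign (inner ℝ (θ : EuclideanSpace ℝ (Fin n)) v : ℝ)
        ∂((volume : Measure (EuclideanSpace ℝ (Fin n))).toSphere))
        * ((1 / 2) * Real.Gamma (((n : ℝ) + 1) / 2))
      = Real.pi ^ (((n : ℝ) - 1) / 2) * (v j / ‖v‖) := by
    rw [← aux_polar n hn j v, aux_gauss n hn j v hv]
  have hc : ((1 : ℝ) / 2) * Real.Gamma (((n : ℝ) + 1) / 2) ≠ 0 := by positivity
  have h2 : (∫ θ : Metric.sphere (0 : EuclideanSpace ℝ (Fin n)) 1,
        ((θ : EuclideanSpace ℝ (Fin n)) j) *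
          Real.sign (inner ℝ (θ : EuclideanSpace ℝ (Fin n)) v : ℝ)
        ∂((volume : Measure (EuclideanSpace ℝ (Fin n))).toSphere))
      = Real.pi ^ (((n : ℝ) - 1) / 2) * (v j / ‖v‖)
          / ((1 / 2) * Real.Gamma (((n : ℝ) + 1) / 2)) := by
    rw [eq_div_iff hc]; exact key
  rw [h2]
  field_simp
end

section
/- Let n ≥ 1 and let A = (A_1,…,A_n) where each A_k = [[a_k, b_k],[c_k, d_k]] is a real 2×2 matrix of determinant 1 with b_k ≠ 0, and set A_k^{−1} = [[d_k, −b_k],[−c_k, a_k]]. Then for every Schwartz function f : ℝⁿ → ℂ and every x ∈ ℝⁿ, the inversion formula 𝓛_{A^{−1}}(𝓛_A f)(x) = f(x) holds, where both linear canonical transforms are absolutely convergent integrals. -/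
open MeasureTheory Filter Topology
open scoped Real ENNReal RealInnerProductSpace

noncomputable section

/-- The constant `c̃ₙ = Γ((n+1)/2) / π^((n+1)/2)`. -/
def rieszConst (n : ℕ) : ℝ :=
  Real.Gamma (((n : ℝ) + 1) / 2) / Real.pi ^ (((n : ℝ) + 1) / 2)

/-- The chirp function `exp(i Σₖ wₖ yₖ²)`. -/
def chirp {n : ℕ} (w : Fin n → ℝ) (y : EuclideanSpace ℝ (Fin n)) : ℂ :=
  Complex.exp (Complex.I * ((∑ k, w k * y k ^ 2 : ℝ) : ℂ))

/-- The truncated Riesz-type singular integral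
`∫_{‖x-y‖ ≥ ε} (xⱼ - yⱼ) ‖x - y‖^{-(n+1)} g y dy`. -/
def truncRiesz {n : ℕ} (j : Fin n) (g : EuclideanSpace ℝ (Fin n) → ℂ)
    (x : EuclideanSpace ℝ (Fin n)) (ε : ℝ) : ℂ :=
  ∫ y in {y : EuclideanSpace ℝ (Fin n) | ε ≤ ‖x - y‖},
    ((x j - y j : ℝ) : ℂ) / ((‖x - y‖ : ℝ) : ℂ) ^ (n + 1) * g y

/-- The principal value `lim_{ε → 0⁺}` of the truncated Riesz-type singular integral. -/
def pvRiesz {n : ℕ} (j : Fin n) (g : EuclideanSpace ℝ (Fin n) → ℂ)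
    (x : EuclideanSpace ℝ (Fin n)) : ℂ :=
  limUnder (𝓝[>] (0 : ℝ)) (truncRiesz j g x)

/-- The `j`-th linear canonical Riesz transform with parameters `a b d`
(entries of the matrices `Aₖ = [[aₖ, bₖ], [cₖ, dₖ]]`). -/
def lcRiesz {n : ℕ} (a b d : Fin n → ℝ) (j : Fin n)
    (f : EuclideanSpace ℝ (Fin n) → ℂ) (x : EuclideanSpace ℝ (Fin n)) : ℂ :=
  (rieszConst n : ℂ) * chirp (fun k => -(d k) / (2 * b k)) x *
    pvRiesz j (fun y => f y * chirp (fun k => a k / (2 * b k)) y) x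

/-- The classical `j`-th Riesz transform (principal value). -/
def rieszTrans {n : ℕ} (j : Fin n) (f : EuclideanSpace ℝ (Fin n) → ℂ)
    (x : EuclideanSpace ℝ (Fin n)) : ℂ :=
  (rieszConst n : ℂ) * pvRiesz j f x

/-- The kernel of the linear canonical transform with parameters `a b d`. -/
def lctKernel {n : ℕ} (a b d : Fin n → ℝ)
    (x u : EuclideanSpace ℝ (Fin n)) : ℂ :=
  ∏ k, ((2 * (Real.pi : ℂ) * Complex.I * (b k : ℂ))⁻¹ ^ ((1 : ℂ) / 2) *
    (Complex.exp (Complex.I * ((a k * x k ^ 2 / (2 * b k) : ℝ) : ℂ)) *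
      (Complex.exp (-(Complex.I * ((x k * u k / b k : ℝ) : ℂ))) *
        Complex.exp (Complex.I * ((d k * u k ^ 2 / (2 * b k) : ℝ) : ℂ)))))

/-- The linear canonical transform with parameters `a b d`. -/
def lct {n : ℕ} (a b d : Fin n → ℝ) (f : EuclideanSpace ℝ (Fin n) → ℂ)
    (u : EuclideanSpace ℝ (Fin n)) : ℂ :=
  ∫ x, f x * lctKernel a b d x u

end


section Aux
open MeasureTheory Complex
open scoped Real ContDiff

set_option maxHeartbeats 1000000 in
lemma aux_hasTemperateGrowth {E : Type*} [NormedAddCommGroup E] [NormedSpace ℝ E]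
    (f : E → ℂ) (B : E →L[ℝ] (E →L[ℝ] ℂ)) (hf : ContDiff ℝ ∞ f)
    (hfB : fderiv ℝ f = fun x => f x • B x) (hf1 : ∀ x, ‖f x‖ ≤ 1) :
    Function.HasTemperateGrowth f := by
  have hB : ∀ (i : ℕ) (x : E), ‖iteratedFDeriv ℝ i (⇑B) x‖ ≤ ‖B‖ * (1 + ‖x‖) := by
    intro i x
    have h1x : (0:ℝ) ≤ ‖x‖ := norm_nonneg x
    have hBn : (0:ℝ) ≤ ‖B‖ := norm_nonneg B
    match i with
    | 0 =>
      rw [norm_iteratedFDeriv_zero]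
      exact (B.le_opNorm x).trans (by nlinarith)
    | (j+1) =>
      have hd : fderiv ℝ (⇑B) = fun _ : E => B := by
        ext1 v; exact B.fderiv
      rw [← norm_iteratedFDeriv_fderiv, hd]
      match j with
      | 0 =>
        rw [norm_iteratedFDeriv_zero]
        nlinarith
      | (m+1) =>
        rw [iteratedFDeriv_const_of_ne (by omega)]
        simp only [Pi.zero_apply, norm_zero]
        positivity
  have main : ∀ N : ℕ, ∃ C : ℝ, 0 ≤ C ∧ ∀ i ≤ N, ∀ x : E,
      ‖iteratedFDeriv ℝ i f x‖ ≤ C * (1 + ‖x‖) ^ N := by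
    intro N
    induction N with
    | zero =>
      refine ⟨1, zero_le_one, ?_⟩
      intro i hi x
      interval_cases i
      rw [norm_iteratedFDeriv_zero]
      simpa using hf1 x
    | succ N ih =>
      obtain ⟨C, hC0, hC⟩ := ih
      refine ⟨C + 2 ^ N * (C * (‖B‖ + 1)), by positivity, ?_⟩
      intro i hi x
      have h1x : (1:ℝ) ≤ 1 + ‖x‖ := by simp [norm_nonneg]
      have hpow : (1 + ‖x‖) ^ N ≤ (1 + ‖x‖) ^ (N+1) :=
        pow_le_pow_right₀ h1x (by omega)
      have hpow0 : (0:ℝ) ≤ (1 + ‖x‖) ^ (N+1) := by positivity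
      have hCle : C ≤ C + 2 ^ N * (C * (‖B‖ + 1)) := le_add_of_nonneg_right (by positivity)
      rcases Nat.lt_or_ge i (N+1) with hi' | hi'
      · calc ‖iteratedFDeriv ℝ i f x‖ ≤ C * (1 + ‖x‖) ^ N := hC i (by omega) x
          _ ≤ C * (1 + ‖x‖) ^ (N+1) := mul_le_mul_of_nonneg_left hpow hC0
          _ ≤ (C + 2 ^ N * (C * (‖B‖ + 1))) * (1 + ‖x‖) ^ (N+1) :=
              mul_le_mul_of_nonneg_right hCle hpow0
      · have hieq : i = N + 1 := by omega
        subst hieq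
        rw [← norm_iteratedFDeriv_fderiv, hfB]
        have hsmul := norm_iteratedFDeriv_smul_le (𝕜 := ℝ) (f := f) (g := ⇑B)
          hf B.contDiff x (n := N) (mod_cast le_top)
        refine hsmul.trans ?_
        set M : ℝ := C * (‖B‖ + 1) * (1 + ‖x‖) ^ (N+1) with hM
        have hterm : ∀ j ∈ Finset.range (N+1),
            (N.choose j : ℝ) * ‖iteratedFDeriv ℝ j f x‖ * ‖iteratedFDeriv ℝ (N - j) (⇑B) x‖ ≤
            (N.choose j : ℝ) * M := by
          intro j hj
          simp only [Finset.mem_range] at hj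
          have h1 := hC j (by omega) x
          have h2' : ‖iteratedFDeriv ℝ (N - j) (⇑B) x‖ ≤ (‖B‖+1) * (1 + ‖x‖) := by
            refine (hB (N - j) x).trans ?_
            apply mul_le_mul_of_nonneg_right (by linarith [norm_nonneg B]) (by linarith)
          have key : ‖iteratedFDeriv ℝ j f x‖ * ‖iteratedFDeriv ℝ (N - j) (⇑B) x‖ ≤ M := by
            calc ‖iteratedFDeriv ℝ j f x‖ * ‖iteratedFDeriv ℝ (N - j) (⇑B) x‖
                ≤ (C * (1 + ‖x‖) ^ N) * ((‖B‖+1) * (1 + ‖x‖)) :=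
                  mul_le_mul h1 h2' (norm_nonneg _) (by positivity)
              _ = M := by rw [hM]; ring
          calc (N.choose j : ℝ) * ‖iteratedFDeriv ℝ j f x‖ * ‖iteratedFDeriv ℝ (N - j) (⇑B) x‖
              = (N.choose j : ℝ) * (‖iteratedFDeriv ℝ j f x‖ * ‖iteratedFDeriv ℝ (N - j) (⇑B) x‖) := by
                ring
            _ ≤ (N.choose j : ℝ) * M := mul_le_mul_of_nonneg_left key (Nat.cast_nonneg _)
        calc (∑ j ∈ Finset.range (N+1), (N.choose j : ℝ) * ‖iteratedFDeriv ℝ j f x‖ *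
              ‖iteratedFDeriv ℝ (N - j) (⇑B) x‖)
            ≤ ∑ j ∈ Finset.range (N+1), (N.choose j : ℝ) * M := Finset.sum_le_sum hterm
          _ = (2:ℝ) ^ N * M := by
              rw [← Finset.sum_mul]
              norm_cast
              rw [Nat.sum_range_choose]
          _ = (2 ^ N * (C * (‖B‖ + 1))) * (1 + ‖x‖) ^ (N+1) := by rw [hM]; ring
          _ ≤ (C + 2 ^ N * (C * (‖B‖ + 1))) * (1 + ‖x‖) ^ (N+1) :=
              mul_le_mul_of_nonneg_right (le_add_of_nonneg_left hC0) hpow0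
  refine ⟨hf, fun n => ?_⟩
  obtain ⟨C, hC0, h⟩ := main n
  exact ⟨n, C, fun x => h n le_rfl x⟩

noncomputable section

def chirpL {n : ℕ} (w : Fin n → ℝ) :
    EuclideanSpace ℝ (Fin n) →L[ℝ] (EuclideanSpace ℝ (Fin n) →L[ℝ] ℝ) :=
  ∑ k, (2 * w k) • ((EuclideanSpace.proj k).smulRight (EuclideanSpace.proj k))

def chirpB {n : ℕ} (w : Fin n → ℝ) :
    EuclideanSpace ℝ (Fin n) →L[ℝ] (EuclideanSpace ℝ (Fin n) →L[ℝ] ℂ) :=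
  Complex.I • ((ContinuousLinearMap.compL ℝ (EuclideanSpace ℝ (Fin n)) ℝ ℂ
    Complex.ofRealCLM).comp (chirpL w))

end

lemma hasFDerivAt_chirpS {n : ℕ} (w : Fin n → ℝ) (x : EuclideanSpace ℝ (Fin n)) :
    HasFDerivAt (fun y : EuclideanSpace ℝ (Fin n) => (∑ k, w k * y k ^ 2 : ℝ))
      (chirpL w x) x := by
  have hfun : (fun y : EuclideanSpace ℝ (Fin n) => (∑ k, w k * y k ^ 2 : ℝ)) =
      fun y : EuclideanSpace ℝ (Fin n) => (∑ k, w k * (y k * y k) : ℝ) := by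
    funext y
    exact Finset.sum_congr rfl fun k _ => by ring
  rw [hfun]
  have h := HasFDerivAt.fun_sum (fun k (_ : k ∈ Finset.univ) =>
    ((((EuclideanSpace.proj (𝕜 := ℝ) k).hasFDerivAt (x := x)).mul
      ((EuclideanSpace.proj (𝕜 := ℝ) k).hasFDerivAt (x := x))).const_mul (w k)))
  have heq : chirpL w x = ∑ k ∈ Finset.univ, w k •
      ((EuclideanSpace.proj (𝕜 := ℝ) k) x • (EuclideanSpace.proj (𝕜 := ℝ) k) +
       (EuclideanSpace.proj (𝕜 := ℝ) k) x • (EuclideanSpace.proj (𝕜 := ℝ) k)) := by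
    ext v
    have hproj : ∀ (z : EuclideanSpace ℝ (Fin n)) (k : Fin n),
        (EuclideanSpace.proj (𝕜 := ℝ) k) z = z k := fun _ _ => rfl
    simp only [chirpL, ContinuousLinearMap.coe_sum', Finset.sum_apply,
      ContinuousLinearMap.smul_apply, ContinuousLinearMap.smulRight_apply,
      ContinuousLinearMap.add_apply, smul_eq_mul, hproj]
    exact Finset.sum_congr rfl fun k _ => by ring
  rw [heq]
  exact h

lemma hasFDerivAt_chirp {n : ℕ} (w : Fin n → ℝ) (x : EuclideanSpace ℝ (Fin n)) :
    HasFDerivAt (chirp w) (chirp w x • chirpB w x) x := by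
  have h3 : HasFDerivAt (fun y : EuclideanSpace ℝ (Fin n) => ((∑ k, w k * y k ^ 2 : ℝ) : ℂ))
      (Complex.ofRealCLM.comp (chirpL w x)) x :=
    (Complex.ofRealCLM.hasFDerivAt).comp x (hasFDerivAt_chirpS w x)
  have h4 := h3.const_mul Complex.I
  have h5 : HasFDerivAt (fun y : EuclideanSpace ℝ (Fin n) =>
      Complex.I * ((∑ k, w k * y k ^ 2 : ℝ) : ℂ)) (chirpB w x) x := by
    have hB : chirpB w x = Complex.I • (Complex.ofRealCLM.comp (chirpL w x)) := rfl
    rw [hB]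
    exact h4
  exact h5.cexp

lemma chirp_norm_le {n : ℕ} (w : Fin n → ℝ) (y : EuclideanSpace ℝ (Fin n)) :
    ‖chirp w y‖ ≤ 1 := by
  rw [show chirp w y = Complex.exp (Complex.I * ((∑ k, w k * y k ^ 2 : ℝ) : ℂ)) from rfl]
  rw [Complex.norm_exp]
  have h0 : (Complex.I * ((∑ k, w k * y k ^ 2 : ℝ) : ℂ)).re = 0 := by
    rw [Complex.mul_re, Complex.ofReal_re, Complex.ofReal_im, Complex.I_re, Complex.I_im]
    ring
  rw [h0, Real.exp_zero]

lemma contDiff_chirp {n : ℕ} (w : Fin n → ℝ) : ContDiff ℝ ∞ (chirp w) := by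
  have : chirp w = fun y : EuclideanSpace ℝ (Fin n) =>
      Complex.exp (Complex.I * ((∑ k, w k * y k ^ 2 : ℝ) : ℂ)) := rfl
  rw [this]
  have hS : ContDiff ℝ ∞ (fun y : EuclideanSpace ℝ (Fin n) => (∑ k, w k * y k ^ 2 : ℝ)) :=
    ContDiff.sum (f := fun (k : Fin n) (y : EuclideanSpace ℝ (Fin n)) => w k * y k ^ 2)
      (s := Finset.univ) fun k _ => contDiff_const.mul
        ((EuclideanSpace.proj (𝕜 := ℝ) k).contDiff.pow 2)
  exact ContDiff.cexp (contDiff_const.mul (Complex.ofRealCLM.contDiff.comp hS))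

lemma chirp_hasTemperateGrowth {n : ℕ} (w : Fin n → ℝ) :
    Function.HasTemperateGrowth (chirp w) :=
  aux_hasTemperateGrowth (chirp w) (chirpB w) (contDiff_chirp w)
    (funext fun x => (hasFDerivAt_chirp w x).fderiv) (chirp_norm_le w)

lemma cpow_half_pos (r : ℝ) (hr : 0 < r) :
    ((r : ℂ) * Complex.I) ^ ((1:ℂ)/2) * ((r : ℂ) * (-Complex.I)) ^ ((1:ℂ)/2) = (r : ℂ) := by
  have hr0 : (r : ℂ) ≠ 0 := Complex.ofReal_ne_zero.mpr hr.ne'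
  have h1 : ((r : ℂ) * Complex.I) ≠ 0 := mul_ne_zero hr0 Complex.I_ne_zero
  have h2 : ((r : ℂ) * (-Complex.I)) ≠ 0 := mul_ne_zero hr0 (neg_ne_zero.mpr Complex.I_ne_zero)
  rw [Complex.cpow_def_of_ne_zero h1, Complex.cpow_def_of_ne_zero h2, ← Complex.exp_add,
    ← add_mul]
  have hlog1 : Complex.log ((r : ℂ) * Complex.I) = (Real.log r : ℂ) + ((π/2 : ℝ) : ℂ) * Complex.I := by
    rw [Complex.log]
    have habs : ‖(r : ℂ) * Complex.I‖ = r := by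
      rw [norm_mul, Complex.norm_I, Complex.norm_real, Real.norm_eq_abs, abs_of_pos hr, mul_one]
    have harg : ((r : ℂ) * Complex.I).arg = π/2 := by
      rw [Complex.arg_real_mul _ hr, Complex.arg_I]
    rw [habs, harg]
  have hlog2 : Complex.log ((r : ℂ) * (-Complex.I)) = (Real.log r : ℂ) + ((-(π/2) : ℝ) : ℂ) * Complex.I := by
    rw [Complex.log]
    have habs : ‖(r : ℂ) * (-Complex.I)‖ = r := by
      simp [abs_of_pos hr]
    have harg : ((r : ℂ) * (-Complex.I)).arg = -(π/2) := by
      rw [Complex.arg_real_mul _ hr, Complex.arg_neg_I]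
    rw [habs, harg]
  rw [hlog1, hlog2]
  have heq : ((Real.log r : ℂ) + ((π/2 : ℝ) : ℂ) * Complex.I +
      ((Real.log r : ℂ) + ((-(π/2) : ℝ) : ℂ) * Complex.I)) * ((1:ℂ)/2) = (Real.log r : ℂ) := by
    push_cast
    ring
  rw [heq, ← Complex.ofReal_exp, Real.exp_log hr]

lemma cpow_half_pair (r : ℝ) (hr : r ≠ 0) :
    ((r : ℂ) * Complex.I) ^ ((1:ℂ)/2) * (((-r : ℝ) : ℂ) * Complex.I) ^ ((1:ℂ)/2) =
      ((|r| : ℝ) : ℂ) := by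
  rcases lt_or_gt_of_ne hr with hneg | hpos
  · have h1 : ((r : ℂ) * Complex.I) = ((-r : ℝ) : ℂ) * (-Complex.I) := by push_cast; ring
    rw [h1, mul_comm, cpow_half_pos (-r) (by linarith), abs_of_neg hneg]
  · have h1 : (((-r : ℝ) : ℂ) * Complex.I) = (r : ℂ) * (-Complex.I) := by push_cast; ring
    rw [h1, cpow_half_pos r hpos, abs_of_pos hpos]

lemma const_pair (s : ℝ) (hs : s ≠ 0) :
    (2 * (π : ℂ) * Complex.I * (s : ℂ))⁻¹ ^ ((1:ℂ)/2) *
      (2 * (π : ℂ) * Complex.I * ((-s : ℝ) : ℂ))⁻¹ ^ ((1:ℂ)/2) =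
    (((2 * π * |s|)⁻¹ : ℝ) : ℂ) := by
  have hpi : (π : ℝ) ≠ 0 := Real.pi_ne_zero
  have h2πs : (2 * (π : ℂ) * (s : ℂ)) ≠ 0 := by
    push_cast
    simp only [ne_eq, mul_eq_zero, not_or]
    exact ⟨⟨two_ne_zero, Complex.ofReal_ne_zero.mpr hpi⟩, Complex.ofReal_ne_zero.mpr hs⟩
  set r : ℝ := -(2 * π * s)⁻¹ with hrdef
  have hrne : r ≠ 0 := by
    simp only [hrdef, ne_eq, neg_eq_zero, inv_eq_zero, mul_eq_zero, not_or]
    exact ⟨⟨two_ne_zero, hpi⟩, hs⟩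
  have e1 : (2 * (π : ℂ) * Complex.I * (s : ℂ))⁻¹ = ((r : ℝ) : ℂ) * Complex.I := by
    refine (eq_inv_of_mul_eq_one_left ?_).symm
    rw [hrdef]
    push_cast
    rw [show (-(2 * (π:ℂ) * (s:ℂ))⁻¹ * Complex.I) * (2 * (π:ℂ) * Complex.I * (s:ℂ)) =
      -((2 * (π:ℂ) * (s:ℂ))⁻¹ * (2 * (π:ℂ) * (s:ℂ))) * (Complex.I * Complex.I) by ring,
      inv_mul_cancel₀ h2πs, Complex.I_mul_I]
    ring
  have e2 : (2 * (π : ℂ) * Complex.I * ((-s : ℝ) : ℂ))⁻¹ = ((-r : ℝ) : ℂ) * Complex.I := by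
    refine (eq_inv_of_mul_eq_one_left ?_).symm
    rw [hrdef]
    push_cast
    rw [show (-(-(2 * (π:ℂ) * (s:ℂ))⁻¹) * Complex.I) * (2 * (π:ℂ) * Complex.I * -(s:ℂ)) =
      -((2 * (π:ℂ) * (s:ℂ))⁻¹ * (2 * (π:ℂ) * (s:ℂ))) * (Complex.I * Complex.I) by ring,
      inv_mul_cancel₀ h2πs, Complex.I_mul_I]
    ring
  rw [e1, e2, cpow_half_pair r hrne]
  congr 1
  rw [hrdef, abs_neg, abs_inv, abs_mul, abs_mul, abs_of_pos Real.pi_pos]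
  norm_num

end Aux

section Helpers

open MeasureTheory Complex
open scoped Real ContDiff

lemma exp_prod_sum {n : ℕ} (c : Fin n → ℝ) :
    ∏ k, Complex.exp (Complex.I * (c k : ℂ)) =
      Complex.exp (Complex.I * ((∑ k, c k : ℝ) : ℂ)) := by
  rw [← Complex.exp_sum]
  congr 1
  push_cast
  rw [Finset.mul_sum]

lemma exp_prod_sum_neg {n : ℕ} (c : Fin n → ℝ) :
    ∏ k, Complex.exp (-(Complex.I * (c k : ℂ))) =
      Complex.exp (-(Complex.I * ((∑ k, c k : ℝ) : ℂ))) := by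
  rw [← Complex.exp_sum]
  congr 1
  push_cast
  rw [Finset.mul_sum, Finset.sum_neg_distrib]

lemma chirp_pair_one {n : ℕ} (w w' : Fin n → ℝ) (hw : ∀ k, w k + w' k = 0)
    (y : EuclideanSpace ℝ (Fin n)) : chirp w y * chirp w' y = 1 := by
  show Complex.exp _ * Complex.exp _ = 1
  rw [← Complex.exp_add]
  have h : (∑ k, w k * y k ^ 2 : ℝ) + (∑ k, w' k * y k ^ 2 : ℝ) = 0 := by
    rw [← Finset.sum_add_distrib]
    apply Finset.sum_eq_zero
    intro k _
    rw [← add_mul, hw k, zero_mul]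
  have h2 : Complex.I * ((∑ k, w k * y k ^ 2 : ℝ) : ℂ) +
      Complex.I * ((∑ k, w' k * y k ^ 2 : ℝ) : ℂ) = 0 := by
    rw [← mul_add, ← Complex.ofReal_add, h]
    simp
  rw [h2, Complex.exp_zero]

lemma lctKernel_eq {n : ℕ} (a b d : Fin n → ℝ) (t u : EuclideanSpace ℝ (Fin n)) :
    lctKernel a b d t u =
      (∏ k, (2 * (Real.pi : ℂ) * Complex.I * (b k : ℂ))⁻¹ ^ ((1 : ℂ) / 2)) *
        (chirp (fun k => a k / (2 * b k)) t *
          (Complex.exp (-(Complex.I * ((∑ k, t k * u k / b k : ℝ) : ℂ))) *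
            chirp (fun k => d k / (2 * b k)) u)) := by
  simp only [lctKernel, chirp]
  rw [Finset.prod_mul_distrib, Finset.prod_mul_distrib, Finset.prod_mul_distrib,
    exp_prod_sum, exp_prod_sum_neg, exp_prod_sum]
  have h1 : (∑ k, a k * t k ^ 2 / (2 * b k) : ℝ) = ∑ k, a k / (2 * b k) * t k ^ 2 :=
    Finset.sum_congr rfl fun k _ => by ring
  have h3 : (∑ k, d k * u k ^ 2 / (2 * b k) : ℝ) = ∑ k, d k / (2 * b k) * u k ^ 2 :=
    Finset.sum_congr rfl fun k _ => by ring
  rw [h1, h3]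

end Helpers

/-- For matrices `Aₖ = [[aₖ,bₖ],[cₖ,dₖ]]` of determinant one with
`bₖ ≠ 0` and inverses `Aₖ⁻¹ = [[dₖ,-bₖ],[-cₖ,aₖ]]`, for every Schwartz function `f`
and every `x`, the inversion formula `𝓛_{A⁻¹}(𝓛_A f)(x) = f(x)` holds, where both
linear canonical transforms are absolutely convergent integrals. -/
theorem lct_inversion (n : ℕ) (hn : 1 ≤ n) (a b c d : Fin n → ℝ)
    (hdet : ∀ k, a k * d k - b k * c k = 1) (hb : ∀ k, b k ≠ 0)
    (f : SchwartzMap (EuclideanSpace ℝ (Fin n)) ℂ)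
    (x : EuclideanSpace ℝ (Fin n)) :
    (∀ u : EuclideanSpace ℝ (Fin n),
      Integrable (fun t : EuclideanSpace ℝ (Fin n) => f t * lctKernel a b d t u)) ∧
    Integrable (fun u : EuclideanSpace ℝ (Fin n) =>
      lct a b d (⇑f) u * lctKernel d (fun k => -(b k)) a u x) ∧
    lct d (fun k => -(b k)) a (lct a b d (⇑f)) x = f x := by
  classical
  open Real in
  open scoped FourierTransform RealInnerProductSpace in
  have hπ : (Real.pi : ℝ) ≠ 0 := Real.pi_ne_zero
  set wA : Fin n → ℝ := fun k => a k / (2 * b k) with hwA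
  set wD : Fin n → ℝ := fun k => d k / (2 * b k) with hwD
  set g : SchwartzMap (EuclideanSpace ℝ (Fin n)) ℂ :=
    SchwartzMap.bilinLeftCLM (ContinuousLinearMap.mul ℝ ℂ) (chirp_hasTemperateGrowth wA) f
    with hgdef
  have hgapp : ∀ y, g y = f y * chirp wA y := fun y => rfl
  set M : Matrix (Fin n) (Fin n) ℝ := Matrix.diagonal (fun k => (2 * Real.pi * b k)⁻¹) with hM
  set Tl : EuclideanSpace ℝ (Fin n) →ₗ[ℝ] EuclideanSpace ℝ (Fin n) :=
    Matrix.toEuclideanLin M with hTl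
  have hTapp : ∀ (u : EuclideanSpace ℝ (Fin n)) (k : Fin n),
      Tl u k = (2 * Real.pi * b k)⁻¹ * u k := by
    intro u k
    show (M.mulVec u) k = _
    rw [hM, Matrix.mulVec_diagonal]
  have hdetT : LinearMap.det Tl = ∏ k, (2 * Real.pi * b k)⁻¹ := by
    rw [hTl, Matrix.toEuclideanLin_eq_toLin, LinearMap.det_toLin, hM, Matrix.det_diagonal]
  have hdetne : LinearMap.det Tl ≠ 0 := by
    rw [hdetT]
    apply Finset.prod_ne_zero_iff.2
    intro k _
    exact inv_ne_zero (by simp [hπ, hb k])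
  have hTmeas : Measurable ⇑Tl := Tl.continuous_of_finiteDimensional.measurable
  have hmap : Measure.map ⇑Tl volume = ENNReal.ofReal |(LinearMap.det Tl)⁻¹| • volume :=
    Measure.map_linearMap_addHaar_eq_smul_addHaar volume hdetne
  set Cf : ℂ := ∏ k, (2 * (Real.pi : ℂ) * Complex.I * (b k : ℂ))⁻¹ ^ ((1 : ℂ)/2) with hCf
  set Cb : ℂ := ∏ k, (2 * (Real.pi : ℂ) * Complex.I * ((-(b k) : ℝ) : ℂ))⁻¹ ^ ((1 : ℂ)/2)
    with hCb
  -- inner product computations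
  have hinner1 : ∀ (t u : EuclideanSpace ℝ (Fin n)),
      ⟪t, Tl u⟫ = ∑ k, t k * ((2 * Real.pi * b k)⁻¹ * u k) := by
    intro t u
    rw [PiLp.inner_apply]
    exact Finset.sum_congr rfl fun k _ => by rw [hTapp, Real.inner_apply]
  have hinner2 : ∀ (u : EuclideanSpace ℝ (Fin n)),
      ⟪Tl u, x⟫ = ∑ k, ((2 * Real.pi * b k)⁻¹ * u k) * x k := by
    intro u
    rw [PiLp.inner_apply]
    exact Finset.sum_congr rfl fun k _ => by rw [hTapp, Real.inner_apply]
  -- pointwise identity for the forward transform integrand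
  have hptw : ∀ u : EuclideanSpace ℝ (Fin n),
      (fun t : EuclideanSpace ℝ (Fin n) => f t * lctKernel a b d t u) =
      fun t : EuclideanSpace ℝ (Fin n) =>
        (Cf * chirp wD u) * ((Real.fourierChar (-⟪t, Tl u⟫) : Circle) • g t) := by
    intro u
    funext t
    rw [lctKernel_eq, Circle.smul_def, smul_eq_mul, Real.fourierChar_apply, hgapp]
    have hre : 2 * Real.pi * (-⟪t, Tl u⟫) = -(∑ k, t k * u k / b k : ℝ) := by
      rw [hinner1, ← Finset.sum_neg_distrib, Finset.mul_sum, ← Finset.sum_neg_distrib]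
      apply Finset.sum_congr rfl
      intro k _
      field_simp [Real.pi_ne_zero, hb k]
    have he : Complex.exp (((2 * Real.pi * (-⟪t, Tl u⟫) : ℝ) : ℂ) * Complex.I) =
        Complex.exp (-(Complex.I * ((∑ k, t k * u k / b k : ℝ) : ℂ))) := by
      rw [hre]
      congr 1
      push_cast
      ring
    rw [he]
    ring
  -- integrability of the forward integrand
  have hint1 : ∀ u : EuclideanSpace ℝ (Fin n),
      Integrable (fun t : EuclideanSpace ℝ (Fin n) => f t * lctKernel a b d t u) := by
    intro u
    rw [hptw u]
    exact ((Real.fourierIntegral_convergent_iff (Tl u)).2 g.integrable).const_mul _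
  -- formula for the forward transform
  have hlct : ∀ u : EuclideanSpace ℝ (Fin n),
      lct a b d (⇑f) u = Cf * chirp wD u * 𝓕 (⇑g) (Tl u) := by
    intro u
    show (∫ t, f t * lctKernel a b d t u) = _
    rw [hptw u]
    rw [MeasureTheory.integral_const_mul]
    rw [Real.fourier_eq]
  -- the function appearing after inversion
  set H : EuclideanSpace ℝ (Fin n) → ℂ :=
    fun ξ => (Real.fourierChar ⟪ξ, x⟫ : Circle) • 𝓕 (⇑g) ξ with hH
  have h𝓕gInt : Integrable (𝓕 (⇑g)) := (SchwartzMap.fourierTransformCLM ℝ g).integrable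
  have h𝓕gCont : Continuous (𝓕 (⇑g)) := (SchwartzMap.fourierTransformCLM ℝ g).continuous
  have hHint : Integrable H := by
    have h2 := (Real.fourierIntegral_convergent_iff
      (μ := volume) (f := 𝓕 (⇑g)) (-x)).2 h𝓕gInt
    have h3 : (fun v : EuclideanSpace ℝ (Fin n) =>
        (Real.fourierChar (-⟪v, -x⟫) : Circle) • 𝓕 (⇑g) v) = H := by
      funext v
      rw [inner_neg_right, neg_neg]
    rwa [h3] at h2
  have hHcont : Continuous H := by
    apply Continuous.smul
    · exact continuous_subtype_val.comp (Real.continuous_fourierChar.comp (continuous_id.inner continuous_const))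
    · exact h𝓕gCont
  -- pointwise identity for the outer integrand
  have hout : (fun u : EuclideanSpace ℝ (Fin n) =>
      lct a b d (⇑f) u * lctKernel d (fun k => -(b k)) a u x) =
      fun u : EuclideanSpace ℝ (Fin n) =>
        (Cf * Cb * chirp (fun k => a k / (2 * -(b k))) x) * H (Tl u) := by
    funext u
    have hHval : H (Tl u) = Complex.exp (((2 * Real.pi * ⟪Tl u, x⟫ : ℝ) : ℂ) * Complex.I) *
        𝓕 (⇑g) (Tl u) := by
      simp only [hH]
      rw [Circle.smul_def, smul_eq_mul, Real.fourierChar_apply]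
    rw [hlct u, lctKernel_eq, hHval]
    have hre : 2 * Real.pi * ⟪Tl u, x⟫ = -(∑ k, u k * x k / (fun k => -(b k)) k : ℝ) := by
      rw [hinner2, ← Finset.sum_neg_distrib, Finset.mul_sum]
      apply Finset.sum_congr rfl
      intro k _
      show 2 * Real.pi * ((2 * Real.pi * b k)⁻¹ * u k * x k) = -(u k * x k / -(b k))
      field_simp [Real.pi_ne_zero, hb k]
    have he : Complex.exp (-(Complex.I *
          ((∑ k, u k * x k / (fun k => -(b k)) k : ℝ) : ℂ))) =
        Complex.exp (((2 * Real.pi * ⟪Tl u, x⟫ : ℝ) : ℂ) * Complex.I) := by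
      rw [hre]
      congr 1
      push_cast
      ring
    rw [he]
    have hcancel : chirp wD u * chirp (fun k => d k / (2 * -(b k))) u = 1 := by
      apply chirp_pair_one
      intro k
      rw [hwD]
      rw [mul_neg, div_neg]
      ring
    calc Cf * chirp wD u * 𝓕 (⇑g) (Tl u) *
          (Cb * (chirp (fun k => d k / (2 * -(b k))) u *
            (Complex.exp (((2 * Real.pi * ⟪Tl u, x⟫ : ℝ) : ℂ) * Complex.I) *
              chirp (fun k => a k / (2 * -(b k))) x)))
        = (Cf * Cb * chirp (fun k => a k / (2 * -(b k))) x) *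
            (Complex.exp (((2 * Real.pi * ⟪Tl u, x⟫ : ℝ) : ℂ) * Complex.I) * 𝓕 (⇑g) (Tl u)) *
            (chirp wD u * chirp (fun k => d k / (2 * -(b k))) u) := by ring
      _ = _ := by rw [hcancel, mul_one]
  -- integrability of the outer integrand
  have hHTl : Integrable (fun u : EuclideanSpace ℝ (Fin n) => H (Tl u)) := by
    have h1 : Integrable H (Measure.map ⇑Tl volume) := by
      rw [hmap]
      exact hHint.smul_measure ENNReal.ofReal_ne_top
    exact (integrable_map_measure hHcont.aestronglyMeasurable hTmeas.aemeasurable).1 h1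
  have hint2 : Integrable (fun u : EuclideanSpace ℝ (Fin n) =>
      lct a b d (⇑f) u * lctKernel d (fun k => -(b k)) a u x) := by
    rw [hout]
    exact hHTl.const_mul _
  refine ⟨hint1, hint2, ?_⟩
  -- the inversion identity
  show (∫ u, lct a b d (⇑f) u * lctKernel d (fun k => -(b k)) a u x) = f x
  rw [hout, MeasureTheory.integral_const_mul]
  have hchg : (∫ u, H (Tl u)) = |LinearMap.det Tl|⁻¹ • ∫ v, H v := by
    have h1 : (∫ u, H (Tl u)) = ∫ v, H v ∂(Measure.map ⇑Tl volume) :=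
      (MeasureTheory.integral_map hTmeas.aemeasurable hHcont.aestronglyMeasurable).symm
    rw [h1, hmap, MeasureTheory.integral_smul_measure,
      ENNReal.toReal_ofReal (abs_nonneg _), abs_inv]
  rw [hchg]
  have hinv : (∫ v, H v) = g x := by
    have h1 : (∫ v, H v) = 𝓕⁻ (𝓕 (⇑g)) x := (Real.fourierInv_eq (𝓕 (⇑g)) x).symm
    rw [h1, Continuous.fourierInv_fourier_eq g.continuous g.integrable h𝓕gInt]
  rw [hinv, hgapp x]
  -- constants
  have hCfCb : Cf * Cb = ((∏ k, (2 * Real.pi * |b k|)⁻¹ : ℝ) : ℂ) := by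
    rw [hCf, hCb, ← Finset.prod_mul_distrib, Complex.ofReal_prod]
    exact Finset.prod_congr rfl fun k _ => const_pair (b k) (hb k)
  have habs : |LinearMap.det Tl|⁻¹ = ∏ k, (2 * Real.pi * |b k|) := by
    rw [hdetT, Finset.abs_prod, ← Finset.prod_inv_distrib]
    apply Finset.prod_congr rfl
    intro k _
    rw [abs_inv, inv_inv, abs_mul, abs_mul, abs_of_pos Real.pi_pos]
    norm_num
  have hch : chirp (fun k => a k / (2 * -(b k))) x * chirp wA x = 1 := by
    apply chirp_pair_one
    intro k
    rw [hwA]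
    rw [mul_neg, div_neg]
    ring
  have hprodR : ((∏ k, (2 * Real.pi * |b k|)⁻¹ : ℝ) : ℂ) *
      ((∏ k, (2 * Real.pi * |b k|) : ℝ) : ℂ) = 1 := by
    rw [← Complex.ofReal_mul, ← Finset.prod_mul_distrib]
    have : (∏ k : Fin n, (2 * Real.pi * |b k|)⁻¹ * (2 * Real.pi * |b k|)) = 1 := by
      apply Finset.prod_eq_one
      intro k _
      exact inv_mul_cancel₀
        (mul_ne_zero (mul_ne_zero two_ne_zero Real.pi_ne_zero) (abs_ne_zero.mpr (hb k)))
    rw [this, Complex.ofReal_one]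
  rw [habs]
  rw [show (∏ k, (2 * Real.pi * |b k|) : ℝ) • (f x * chirp wA x) =
    ((∏ k, (2 * Real.pi * |b k|) : ℝ) : ℂ) * (f x * chirp wA x) from Complex.real_smul]
  calc (Cf * Cb * chirp (fun k => a k / (2 * -(b k))) x) *
        (((∏ k, (2 * Real.pi * |b k|) : ℝ) : ℂ) * (f x * chirp wA x))
      = (Cf * Cb * ((∏ k, (2 * Real.pi * |b k|) : ℝ) : ℂ)) *
        (chirp (fun k => a k / (2 * -(b k))) x * chirp wA x) * f x := by ring
    _ = f x := by rw [hCfCb, hprodR, hch, one_mul, one_mul]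
end

section
/- Work in ℝ², fix j ∈ {1,2} and nonzero reals c_1, c_2, and for parameters (ρ_1, ρ_2, a_1, a_2, d_1, d_2) with ρ_1 c_1 ≠ 0 and ρ_2 c_2 ≠ 0 let A = (A_1, A_2) with A_k = [[a_k, ρ_k c_k],[c_k, d_k]]. Then for every Schwartz function f : ℝ² → ℂ and every x ∈ ℝ², as (ρ_1, ρ_2, a_1, a_2, d_1, d_2) → (−1, −1, 0, 0, 0, 0), the values R_j^A f(x) converge to R_j f(x), the classical j-th Riesz transform of f at x. -/
open MeasureTheory Filter Topology
open scoped Real ENNReal RealInnerProductSpace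

/-- The parameter space `(ρ₁, ρ₂, a₁, a₂, d₁, d₂)` for the family of matrices
`Aₖ = [[aₖ, ρₖ cₖ],[cₖ, dₖ]]`: a triple `(ρ, a, d)`. -/
abbrev LCParam : Type := (Fin 2 → ℝ) × (Fin 2 → ℝ) × (Fin 2 → ℝ)

/-- The limiting parameter point `(ρ, a, d) = (-1, -1, 0, 0, 0, 0)`. -/
def lcParamLimit : LCParam := (fun _ => -1, fun _ => 0, fun _ => 0)

/-- The set of admissible parameters, those with `bₖ = ρₖ cₖ ≠ 0` for `k = 1, 2`. -/
def lcParamValid (c : Fin 2 → ℝ) : Set LCParam := {q | ∀ k, q.1 k * c k ≠ 0}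

open Metric Set in
section


open MeasureTheory Filter Topology Metric Set

noncomputable section

namespace LCAux

abbrev E2 := EuclideanSpace ℝ (Fin 2)

/-- the Riesz kernel -/
def Krn (j : Fin 2) (z : E2) : ℂ := ((z j : ℝ) : ℂ) / ((‖z‖ : ℝ) : ℂ) ^ 3

lemma coord_le (y : E2) (k : Fin 2) : |y k| ≤ ‖y‖ := by
  rw [EuclideanSpace.norm_eq, ← Real.sqrt_sq_eq_abs]
  apply Real.sqrt_le_sqrt
  have := Finset.single_le_sum (f := fun i => ‖y i‖ ^ 2)
    (fun i _ => by positivity) (Finset.mem_univ k)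
  simpa [Real.norm_eq_abs, sq_abs] using this

lemma krn_meas (j : Fin 2) : Measurable (Krn j) := by
  apply Measurable.div
  · exact Complex.measurable_ofReal.comp (EuclideanSpace.proj (𝕜 := ℝ) j).continuous.measurable
  · exact ((Complex.measurable_ofReal.comp continuous_norm.measurable).pow_const 3)

lemma krn_zero (j : Fin 2) : Krn j 0 = 0 := by simp [Krn]

lemma krn_neg (j : Fin 2) (z : E2) : Krn j (-z) = - Krn j z := by
  simp [Krn, neg_div]

lemma krn_norm_le (j : Fin 2) (z : E2) : ‖Krn j z‖ ≤ (‖z‖ ^ 2)⁻¹ := by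
  rcases eq_or_ne z 0 with rfl | hz
  · simp [Krn]
  · have hz' : (0:ℝ) < ‖z‖ := norm_pos_iff.2 hz
    have : ‖Krn j z‖ = |z j| / ‖z‖ ^ 3 := by
      rw [Krn, norm_div, norm_pow]
      simp [Complex.norm_real, Real.norm_eq_abs, abs_of_nonneg hz'.le]
    rw [this]
    rw [div_le_iff₀ (by positivity)]
    have h1 : |z j| ≤ ‖z‖ := coord_le z j
    have : (‖z‖ ^ 2)⁻¹ * ‖z‖ ^ 3 = ‖z‖ := by field_simp
    rw [this]; exact h1

lemma expI_sub_one (r : ℝ) : ‖Complex.exp (Complex.I * r) - 1‖ ≤ 2 * |r| := by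
  rcases le_or_gt (|r|) 1 with h | h
  · have h' : ‖Complex.I * r‖ ≤ 1 := by simpa using h
    have := Complex.norm_exp_sub_one_le h'
    simpa using this
  · have h1 : ‖Complex.exp (Complex.I * r)‖ = 1 := by
      simp [Complex.norm_exp]
    calc ‖Complex.exp (Complex.I * r) - 1‖ ≤ ‖Complex.exp (Complex.I * r)‖ + ‖(1:ℂ)‖ :=
          norm_sub_le _ _
      _ = 2 := by rw [h1]; norm_num
      _ ≤ 2 * |r| := by nlinarith

lemma chirp_norm (w : Fin 2 → ℝ) (y : E2) : ‖chirp w y‖ = 1 := by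
  simp only [chirp, Complex.norm_exp, Complex.mul_re, Complex.I_re,
    Complex.I_im, Complex.ofReal_re, Complex.ofReal_im]
  norm_num

lemma chirp_zero (y : E2) : chirp (0 : Fin 2 → ℝ) y = 1 := by
  simp [chirp]

lemma chirp_sub_le (w : Fin 2 → ℝ) (y y' : E2) :
    ‖chirp w y - chirp w y'‖ ≤ 2 * |(∑ k, w k * y k ^ 2) - (∑ k, w k * y' k ^ 2)| := by
  have hst : Complex.I * ((∑ k, w k * y k ^ 2 : ℝ) : ℂ)
      = Complex.I * ((∑ k, w k * y' k ^ 2 : ℝ) : ℂ)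
        + Complex.I * (((∑ k, w k * y k ^ 2) - ∑ k, w k * y' k ^ 2 : ℝ) : ℂ) := by
    push_cast; ring
  have key : chirp w y = chirp w y' *
      Complex.exp (Complex.I * (((∑ k, w k * y k ^ 2) - ∑ k, w k * y' k ^ 2 : ℝ) : ℂ)) := by
    rw [chirp, chirp, ← Complex.exp_add, ← hst]
  calc ‖chirp w y - chirp w y'‖
      = ‖chirp w y' * (Complex.exp (Complex.I *
          (((∑ k, w k * y k ^ 2) - ∑ k, w k * y' k ^ 2 : ℝ) : ℂ)) - 1)‖ := by
        rw [mul_sub, mul_one, ← key]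
    _ = ‖Complex.exp (Complex.I *
          (((∑ k, w k * y k ^ 2) - ∑ k, w k * y' k ^ 2 : ℝ) : ℂ)) - 1‖ := by
        rw [norm_mul, chirp_norm, one_mul]
    _ ≤ 2 * |(∑ k, w k * y k ^ 2) - (∑ k, w k * y' k ^ 2)| := expI_sub_one _

end LCAux
namespace LCAux

def Sball : Set E2 := {z | ‖z‖ ≤ 1}
def Souter : Set E2 := {z | 1 < ‖z‖}
def Sann (ε : ℝ) : Set E2 := {z | ε ≤ ‖z‖ ∧ ‖z‖ ≤ 1}
def Sout (ε : ℝ) : Set E2 := {z | ε ≤ ‖z‖}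

lemma sball_eq : Sball = Metric.closedBall (0 : E2) 1 := by
  ext z; simp [Sball, Metric.mem_closedBall, dist_zero_right]

lemma meas_sball : MeasurableSet Sball :=
  (isClosed_le continuous_norm continuous_const).measurableSet

lemma meas_souter : MeasurableSet Souter :=
  (isOpen_lt continuous_const continuous_norm).measurableSet

lemma meas_sann (ε : ℝ) : MeasurableSet (Sann ε) := by
  have : Sann ε = {z : E2 | ε ≤ ‖z‖} ∩ {z | ‖z‖ ≤ 1} := rfl
  rw [this]
  exact ((isClosed_le continuous_const continuous_norm).measurableSet).inter
    (isClosed_le continuous_norm continuous_const).measurableSet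

lemma meas_sout (ε : ℝ) : MeasurableSet (Sout ε) :=
  (isClosed_le continuous_const continuous_norm).measurableSet

lemma finrank_E2 : Module.finrank ℝ E2 = 2 := finrank_euclideanSpace_fin

/-- The key integrability: `‖z‖⁻¹` is integrable on the unit ball of `ℝ²`. -/
lemma integrableOn_inv_norm : IntegrableOn (fun z : E2 => ‖z‖⁻¹) Sball volume := by
  constructor
  · exact (measurable_norm.inv).aestronglyMeasurable
  · rw [hasFiniteIntegral_iff_norm]
    have hnn : ∀ z : E2, ‖(‖z‖⁻¹)‖ = ‖z‖⁻¹ := fun z => by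
      rw [Real.norm_eq_abs, abs_of_nonneg (by positivity)]
    simp only [hnn]
    rw [lintegral_eq_lintegral_meas_le (volume.restrict Sball) (f := fun z : E2 => ‖z‖⁻¹)
      (Eventually.of_forall fun z => inv_nonneg.2 (norm_nonneg z))
      ((measurable_norm.inv).aemeasurable)]
    set V : ℝ≥0∞ := volume (Metric.ball (0 : E2) 1) with hV
    have hVfin : V < ⊤ := measure_ball_lt_top
    have hVball : volume Sball < ⊤ := by
      rw [sball_eq]; exact measure_closedBall_lt_top
    have key : ∀ t : ℝ, 0 < t →
        (volume.restrict Sball) {a : E2 | t ≤ ‖a‖⁻¹} ≤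
          min (volume Sball) (ENNReal.ofReal ((t⁻¹) ^ 2) * V) := by
      intro t ht
      refine le_min ?_ ?_
      · calc (volume.restrict Sball) {a : E2 | t ≤ ‖a‖⁻¹}
            ≤ (volume.restrict Sball) Set.univ := measure_mono (Set.subset_univ _)
          _ = volume Sball := by rw [Measure.restrict_apply_univ]
      · calc (volume.restrict Sball) {a : E2 | t ≤ ‖a‖⁻¹}
            ≤ volume {a : E2 | t ≤ ‖a‖⁻¹} := Measure.restrict_apply_le _ _
          _ ≤ volume (Metric.closedBall (0 : E2) t⁻¹) := by
              apply measure_mono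
              intro a ha
              simp only [Set.mem_setOf_eq] at ha
              rcases eq_or_ne a 0 with rfl | h0
              · simp [Metric.mem_closedBall, dist_zero_right]; positivity
              · have hna : (0:ℝ) < ‖a‖ := norm_pos_iff.2 h0
                rw [Metric.mem_closedBall, dist_zero_right]
                have := inv_anti₀ ht ha
                simpa using this
          _ = ENNReal.ofReal ((t⁻¹) ^ 2) * V := by
              rw [Measure.addHaar_closedBall _ _ (by positivity), finrank_E2]
    calc ∫⁻ t in Set.Ioi (0:ℝ), (volume.restrict Sball) {a : E2 | t ≤ ‖a‖⁻¹}
        ≤ ∫⁻ t in Set.Ioi (0:ℝ), min (volume Sball) (ENNReal.ofReal ((t⁻¹) ^ 2) * V) := by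
          apply setLIntegral_mono' measurableSet_Ioi
          intro t ht
          exact key t ht
      _ ≤ ∫⁻ t in Set.Ioc (0:ℝ) 1 ∪ Set.Ioi 1,
            min (volume Sball) (ENNReal.ofReal ((t⁻¹) ^ 2) * V) :=
          lintegral_mono_set Set.Ioi_subset_Ioc_union_Ioi
      _ ≤ (∫⁻ t in Set.Ioc (0:ℝ) 1, min (volume Sball) (ENNReal.ofReal ((t⁻¹) ^ 2) * V))
            + ∫⁻ t in Set.Ioi (1:ℝ), min (volume Sball) (ENNReal.ofReal ((t⁻¹) ^ 2) * V) :=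
          lintegral_union_le _ _ _
      _ < ⊤ := by
          rw [ENNReal.add_lt_top]
          constructor
          · calc ∫⁻ t in Set.Ioc (0:ℝ) 1, min (volume Sball) (ENNReal.ofReal ((t⁻¹) ^ 2) * V)
                ≤ ∫⁻ _t in Set.Ioc (0:ℝ) 1, volume Sball :=
                  lintegral_mono fun t => min_le_left _ _
              _ = volume Sball * volume (Set.Ioc (0:ℝ) 1) := setLIntegral_const _ _
              _ < ⊤ := by
                  apply ENNReal.mul_lt_top hVball
                  simp [Real.volume_Ioc]
          · calc ∫⁻ t in Set.Ioi (1:ℝ), min (volume Sball) (ENNReal.ofReal ((t⁻¹) ^ 2) * V)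
                ≤ ∫⁻ t in Set.Ioi (1:ℝ), ENNReal.ofReal ((t⁻¹) ^ 2) * V :=
                  lintegral_mono fun t => min_le_right _ _
              _ = (∫⁻ t in Set.Ioi (1:ℝ), ENNReal.ofReal ((t⁻¹) ^ 2)) * V :=
                  lintegral_mul_const' _ _ hVfin.ne
              _ < ⊤ := by
                  apply ENNReal.mul_lt_top _ hVfin
                  have h1 : IntegrableOn (fun t : ℝ => t ^ (-2 : ℝ)) (Set.Ioi 1) volume :=
                    integrableOn_Ioi_rpow_of_lt (by norm_num) one_pos
                  have h2 := h1.setLIntegral_lt_top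
                  refine lt_of_le_of_lt (le_of_eq ?_) h2
                  apply setLIntegral_congr_fun measurableSet_Ioi
                  intro t ht
                  show ENNReal.ofReal (t⁻¹ ^ 2) = ENNReal.ofReal (t ^ (-2:ℝ))
                  congr 1
                  rw [← Real.rpow_natCast (t⁻¹) 2, ← Real.rpow_neg_one t, ← Real.rpow_mul
                    (by have h3 : (1:ℝ) < t := ht; linarith : (0:ℝ) ≤ t)]
                  norm_num

end LCAux
namespace LCAux

lemma sann_neg_mem (ε : ℝ) {z : E2} : -z ∈ Sann ε ↔ z ∈ Sann ε := by
  simp [Sann]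

/-- The odd kernel integrates to zero over any annulus. -/
lemma annulus_integral_zero (j : Fin 2) (ε : ℝ) : ∫ z in Sann ε, Krn j z = 0 := by
  rw [← integral_indicator (meas_sann ε)]
  have hodd : ∀ z : E2, (Sann ε).indicator (Krn j) (-z) = - (Sann ε).indicator (Krn j) z := by
    intro z
    by_cases hz : z ∈ Sann ε
    · rw [Set.indicator_of_mem hz, Set.indicator_of_mem ((sann_neg_mem ε).2 hz), krn_neg]
    · rw [Set.indicator_of_notMem hz,
        Set.indicator_of_notMem (fun h => hz ((sann_neg_mem ε).1 h)), neg_zero]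
  have h2 : (∫ z : E2, (Sann ε).indicator (Krn j) z)
      = -∫ z : E2, (Sann ε).indicator (Krn j) z := by
    conv_lhs => rw [← integral_neg_eq_self (fun z => (Sann ε).indicator (Krn j) z) volume]
    simp only [hodd]
    exact integral_neg _
  linear_combination h2 / 2

/-- Change of variables `y = x - z` for the truncated integral. -/
lemma trunc_eq (j : Fin 2) (g : E2 → ℂ) (x : E2) (ε : ℝ) :
    truncRiesz j g x ε = ∫ z in Sout ε, Krn j z * g (x - z) := by
  have hm : MeasurableSet {y : E2 | ε ≤ ‖x - y‖} :=
    (isClosed_le continuous_const (continuous_const.sub continuous_id).norm).measurableSet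
  rw [truncRiesz, ← integral_indicator hm, ← integral_indicator (meas_sout ε),
    ← integral_sub_left_eq_self
      (fun z => (Sout ε).indicator (fun z => Krn j z * g (x - z)) z) volume x]
  congr 1
  funext y
  by_cases h : ε ≤ ‖x - y‖
  · rw [Set.indicator_of_mem (by exact h : x - y ∈ Sout ε),
      Set.indicator_of_mem (by exact h : y ∈ {y : E2 | ε ≤ ‖x - y‖})]
    have hx : x - (x - y) = y := by abel
    have hj : (x - y) j = x j - y j := rfl
    rw [hx, Krn, hj]
  · rw [Set.indicator_of_notMem (by exact h : ¬ x - y ∈ Sout ε),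
      Set.indicator_of_notMem (by exact h : ¬ y ∈ {y : E2 | ε ≤ ‖x - y‖})]

end LCAux
namespace LCAux

def gw (f : SchwartzMap E2 ℂ) (w : Fin 2 → ℝ) (y : E2) : ℂ := f y * chirp w y

lemma chirp_cont (w : Fin 2 → ℝ) : Continuous (chirp w) := by
  apply Complex.continuous_exp.comp
  apply continuous_const.mul
  apply Complex.continuous_ofReal.comp
  apply continuous_finset_sum
  intro k _
  exact continuous_const.mul ((EuclideanSpace.proj (𝕜 := ℝ) k).continuous.pow 2)

lemma gw_cont (f : SchwartzMap E2 ℂ) (w : Fin 2 → ℝ) : Continuous (gw f w) :=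
  f.continuous.mul (chirp_cont w)

lemma norm_gw (f : SchwartzMap E2 ℂ) (w : Fin 2 → ℝ) (y : E2) : ‖gw f w y‖ = ‖f y‖ := by
  rw [gw, norm_mul, chirp_norm, mul_one]

lemma gw_zero (f : SchwartzMap E2 ℂ) : gw f 0 = ⇑f := by
  funext y; rw [gw, chirp_zero, mul_one]

lemma schwartz_lip (f : SchwartzMap E2 ℂ) :
    ∃ C, 0 < C ∧ ∀ p q : E2, ‖f p - f q‖ ≤ C * ‖p - q‖ := by
  obtain ⟨C, hC, hbound⟩ := f.decay 0 1
  refine ⟨C, hC, fun p q => ?_⟩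
  have hd : ∀ y : E2, ‖fderiv ℝ (⇑f) y‖ ≤ C := by
    intro y
    have h1 : ‖fderiv ℝ (⇑f) y‖ = ‖iteratedFDeriv ℝ 1 (⇑f) y‖ := by
      rw [← norm_iteratedFDeriv_fderiv (n := 0), norm_iteratedFDeriv_zero]
    rw [h1]
    simpa using hbound y
  exact Convex.norm_image_sub_le_of_norm_fderiv_le
    (fun y _ => f.differentiable.differentiableAt) (fun y _ => hd y)
    convex_univ (Set.mem_univ q) (Set.mem_univ p)

lemma sum_sq_diff_bound (w : Fin 2 → ℝ) (x z : E2) {W : ℝ}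
    (hW : ∀ k, |w k| ≤ W) (hz : ‖z‖ ≤ 1) :
    |(∑ k, w k * (x - z) k ^ 2) - (∑ k, w k * x k ^ 2)| ≤ 2 * (W * ((2 * ‖x‖ + 1) * ‖z‖)) := by
  have hx0 : (0:ℝ) ≤ ‖x‖ := norm_nonneg x
  have hz0 : (0:ℝ) ≤ ‖z‖ := norm_nonneg z
  have hW0 : (0:ℝ) ≤ W := le_trans (abs_nonneg _) (hW 0)
  have hk : ∀ k : Fin 2, |w k * (x - z) k ^ 2 - w k * x k ^ 2| ≤ W * ((2 * ‖x‖ + 1) * ‖z‖) := by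
    intro k
    have hb := coord_le z k
    have ha := coord_le x k
    have h1 : (x - z) k = x k - z k := rfl
    rw [h1]
    have h2 : w k * (x k - z k) ^ 2 - w k * x k ^ 2 = w k * (z k * (z k - 2 * x k)) := by ring
    rw [h2, abs_mul, abs_mul]
    have h3 : |z k - 2 * x k| ≤ 1 + 2 * ‖x‖ := by
      have hb1 : |z k| ≤ 1 := le_trans hb hz
      calc |z k - 2 * x k| ≤ |z k| + |2 * x k| := abs_sub _ _
        _ = |z k| + 2 * |x k| := by rw [abs_mul, abs_two]
        _ ≤ 1 + 2 * ‖x‖ := by gcongr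
    calc |w k| * (|z k| * |z k - 2 * x k|) ≤ W * (‖z‖ * (1 + 2 * ‖x‖)) := by
          have h4 := hW k
          gcongr <;> first | exact h4 | exact hb | exact h3 | positivity
      _ = W * ((2 * ‖x‖ + 1) * ‖z‖) := by ring
  calc |(∑ k, w k * (x - z) k ^ 2) - (∑ k, w k * x k ^ 2)|
      = |∑ k : Fin 2, (w k * (x - z) k ^ 2 - w k * x k ^ 2)| := by
        rw [Finset.sum_sub_distrib]
    _ ≤ ∑ k : Fin 2, |w k * (x - z) k ^ 2 - w k * x k ^ 2| :=
        Finset.abs_sum_le_sum_abs _ _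
    _ ≤ ∑ _k : Fin 2, W * ((2 * ‖x‖ + 1) * ‖z‖) := Finset.sum_le_sum fun k _ => hk k
    _ = 2 * (W * ((2 * ‖x‖ + 1) * ‖z‖)) := by
        rw [Finset.sum_const]
        simp only [Finset.card_univ, Fintype.card_fin, nsmul_eq_mul, Nat.cast_ofNat]

lemma gw_diff_bound (f : SchwartzMap E2 ℂ) (w : Fin 2 → ℝ) (x : E2) {Cf W : ℝ}
    (hCf : ∀ p q : E2, ‖f p - f q‖ ≤ Cf * ‖p - q‖)
    (hW : ∀ k, |w k| ≤ W) (z : E2) (hz : ‖z‖ ≤ 1) :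
    ‖gw f w (x - z) - gw f w x‖ ≤ (Cf + ‖f x‖ * (4 * W * (2 * ‖x‖ + 1))) * ‖z‖ := by
  have hsplit : gw f w (x - z) - gw f w x
      = (f (x - z) - f x) * chirp w (x - z) + f x * (chirp w (x - z) - chirp w x) := by
    rw [gw, gw]; ring
  have t1 : ‖(f (x - z) - f x : ℂ)‖ ≤ Cf * ‖z‖ := by
    have := hCf (x - z) x
    simpa using this
  have t2 : ‖chirp w (x - z) - chirp w x‖ ≤ 4 * W * ((2 * ‖x‖ + 1) * ‖z‖) := by
    calc ‖chirp w (x - z) - chirp w x‖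
        ≤ 2 * |(∑ k, w k * (x - z) k ^ 2) - (∑ k, w k * x k ^ 2)| := chirp_sub_le w _ x
      _ ≤ 2 * (2 * (W * ((2 * ‖x‖ + 1) * ‖z‖))) := by
          have := sum_sq_diff_bound w x z hW hz
          linarith
      _ = 4 * W * ((2 * ‖x‖ + 1) * ‖z‖) := by ring
  calc ‖gw f w (x - z) - gw f w x‖
      ≤ ‖(f (x - z) - f x : ℂ)‖ * ‖chirp w (x - z)‖
          + ‖(f x : ℂ)‖ * ‖chirp w (x - z) - chirp w x‖ := by
        rw [hsplit]
        exact le_trans (norm_add_le _ _) (by rw [norm_mul, norm_mul])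
    _ ≤ Cf * ‖z‖ * 1 + ‖f x‖ * (4 * W * ((2 * ‖x‖ + 1) * ‖z‖)) := by
        rw [chirp_norm]
        gcongr <;> first | exact t1 | exact t2 | positivity
    _ = (Cf + ‖f x‖ * (4 * W * (2 * ‖x‖ + 1))) * ‖z‖ := by ring

end LCAux
namespace LCAux

/-- The limiting value of the principal-value integral. -/
def Phi (f : SchwartzMap E2 ℂ) (j : Fin 2) (x : E2) (w : Fin 2 → ℝ) : ℂ :=
  (∫ z in Sball, Krn j z * (gw f w (x - z) - gw f w x))
    + ∫ z in Souter, Krn j z * gw f w (x - z)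

lemma meas_i1 (f : SchwartzMap E2 ℂ) (j : Fin 2) (x : E2) (w : Fin 2 → ℝ) :
    Measurable (fun z => Krn j z * (gw f w (x - z) - gw f w x)) :=
  (krn_meas j).mul (((gw_cont f w).comp (continuous_const.sub continuous_id)).sub
    continuous_const).measurable

lemma meas_i2 (f : SchwartzMap E2 ℂ) (j : Fin 2) (x : E2) (w : Fin 2 → ℝ) :
    Measurable (fun z => Krn j z * gw f w (x - z)) :=
  (krn_meas j).mul ((gw_cont f w).comp (continuous_const.sub continuous_id)).measurable

/-- Integrability of the kernel times difference on the unit ball. -/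
lemma int_ball (f : SchwartzMap E2 ℂ) (j : Fin 2) (x : E2) (w : Fin 2 → ℝ) {Cf L : ℝ}
    (hCf : ∀ p q : E2, ‖f p - f q‖ ≤ Cf * ‖p - q‖)
    (hL : L = Cf + ‖f x‖ * (4 * (|w 0| + |w 1|) * (2 * ‖x‖ + 1))) :
    IntegrableOn (fun z => Krn j z * (gw f w (x - z) - gw f w x)) Sball volume := by
  have hW : ∀ k : Fin 2, |w k| ≤ |w 0| + |w 1| := by
    intro k
    fin_cases k
    · simpa using le_add_of_nonneg_right (abs_nonneg (w 1))
    · simpa using le_add_of_nonneg_left (abs_nonneg (w 0))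
  apply Integrable.mono' (integrableOn_inv_norm.const_mul L)
    ((meas_i1 f j x w).aestronglyMeasurable.restrict)
  rw [ae_restrict_iff' meas_sball]
  filter_upwards with z hz
  rcases eq_or_ne z 0 with rfl | h0
  · simp [krn_zero]
  · have hnz : (0:ℝ) < ‖z‖ := norm_pos_iff.2 h0
    calc ‖Krn j z * (gw f w (x - z) - gw f w x)‖
        = ‖Krn j z‖ * ‖gw f w (x - z) - gw f w x‖ := norm_mul _ _
      _ ≤ (‖z‖ ^ 2)⁻¹ * (L * ‖z‖) := by
          apply mul_le_mul (krn_norm_le j z) _ (norm_nonneg _) (by positivity)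
          rw [hL]
          exact gw_diff_bound f w x hCf hW z hz
      _ = L * ‖z‖⁻¹ := by field_simp
  
/-- Integrability of the kernel times `gw` away from the origin. -/
lemma int_out (f : SchwartzMap E2 ℂ) (j : Fin 2) (x : E2) (w : Fin 2 → ℝ) {ε : ℝ} (hε : 0 < ε)
    {s : Set E2} (hs : MeasurableSet s) (hsub : s ⊆ Sout ε) :
    IntegrableOn (fun z => Krn j z * gw f w (x - z)) s volume := by
  have hint : Integrable (fun z : E2 => (ε ^ 2)⁻¹ * ‖f (x - z)‖) volume :=
    ((f.integrable (μ := volume)).comp_sub_left x).norm.const_mul _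
  apply Integrable.mono' hint.integrableOn ((meas_i2 f j x w).aestronglyMeasurable.restrict)
  rw [ae_restrict_iff' hs]
  filter_upwards with z hz
  have hεz : ε ≤ ‖z‖ := hsub hz
  calc ‖Krn j z * gw f w (x - z)‖ = ‖Krn j z‖ * ‖f (x - z)‖ := by
        rw [norm_mul, norm_gw]
    _ ≤ (ε ^ 2)⁻¹ * ‖f (x - z)‖ := by
        apply mul_le_mul_of_nonneg_right _ (norm_nonneg _)
        calc ‖Krn j z‖ ≤ (‖z‖ ^ 2)⁻¹ := krn_norm_le j z
          _ ≤ (ε ^ 2)⁻¹ := by gcongr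

lemma int_krn_ann (j : Fin 2) {ε : ℝ} (hε : 0 < ε) :
    IntegrableOn (Krn j) (Sann ε) volume := by
  have hfin : volume (Sann ε) < ⊤ := by
    apply lt_of_le_of_lt (measure_mono ?_) (sball_eq ▸ measure_closedBall_lt_top :
      volume Sball < ⊤)
    exact fun z hz => hz.2
  apply Integrable.mono' (integrableOn_const hfin.ne : IntegrableOn
    (fun _ : E2 => (ε ^ 2)⁻¹) (Sann ε) volume) ((krn_meas j).aestronglyMeasurable.restrict)
  rw [ae_restrict_iff' (meas_sann ε)]
  filter_upwards with z hz
  calc ‖Krn j z‖ ≤ (‖z‖ ^ 2)⁻¹ := krn_norm_le j z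
    _ ≤ (ε ^ 2)⁻¹ := by gcongr; exact hz.1

lemma sout_union {ε : ℝ} (hε : ε ≤ 1) : Sout ε = Sann ε ∪ Souter := by
  ext z
  simp only [Sout, Sann, Souter, Set.mem_setOf_eq, Set.mem_union]
  constructor
  · intro h
    rcases le_or_gt ‖z‖ 1 with h1 | h1
    · exact Or.inl ⟨h, h1⟩
    · exact Or.inr h1
  · rintro (⟨h, _⟩ | h)
    · exact h
    · linarith

lemma sann_disj (ε : ℝ) : Disjoint (Sann ε) Souter := by
  rw [Set.disjoint_left]
  intro z hz hz'
  exact absurd hz.2 (not_le.mpr hz')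

lemma sann_subset_sball (ε : ℝ) : Sann ε ⊆ Sball := fun z hz => hz.2

lemma sann_subset_sout (ε : ℝ) : Sann ε ⊆ Sout ε := fun z hz => hz.1

lemma souter_subset_sout : Souter ⊆ Sout 1 := by
  intro z hz
  have h : (1:ℝ) < ‖z‖ := hz
  exact le_of_lt h

/-- The splitting identity for the truncated integral, `0 < ε ≤ 1`. -/
lemma trunc_split (f : SchwartzMap E2 ℂ) (j : Fin 2) (x : E2) (w : Fin 2 → ℝ) {Cf L : ℝ}
    (hCf : ∀ p q : E2, ‖f p - f q‖ ≤ Cf * ‖p - q‖)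
    (hL : L = Cf + ‖f x‖ * (4 * (|w 0| + |w 1|) * (2 * ‖x‖ + 1)))
    {ε : ℝ} (hε : 0 < ε) (hε1 : ε ≤ 1) :
    truncRiesz j (gw f w) x ε
      = (∫ z in Sann ε, Krn j z * (gw f w (x - z) - gw f w x))
        + ∫ z in Souter, Krn j z * gw f w (x - z) := by
  rw [trunc_eq, sout_union hε1,
    setIntegral_union (sann_disj ε) meas_souter
      (int_out f j x w hε (meas_sann ε) (sann_subset_sout ε))
      (int_out f j x w one_pos meas_souter souter_subset_sout)]
  congr 1
  have hsplit : ∀ z : E2, Krn j z * gw f w (x - z)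
      = Krn j z * (gw f w (x - z) - gw f w x) + Krn j z * gw f w x := by
    intro z; ring
  rw [show (fun z => Krn j z * gw f w (x - z)) = fun z =>
    Krn j z * (gw f w (x - z) - gw f w x) + Krn j z * gw f w x from funext hsplit]
  rw [integral_add ((int_ball f j x w hCf hL).mono_set (sann_subset_sball ε))
    ((int_krn_ann j hε).mul_const _)]
  rw [integral_mul_const, annulus_integral_zero, zero_mul, add_zero]

end LCAux
namespace LCAux

lemma ind_bound {F : E2 → ℂ} {B : E2 → ℝ} {s t : Set E2} (hst : s ⊆ t)
    (hFB : ∀ z ∈ s, ‖F z‖ ≤ B z) (hB : ∀ z, 0 ≤ B z) :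
    ∀ z, ‖s.indicator F z‖ ≤ t.indicator B z := by
  intro z
  by_cases hz : z ∈ s
  · rw [Set.indicator_of_mem hz, Set.indicator_of_mem (hst hz)]
    exact hFB z hz
  · rw [Set.indicator_of_notMem hz]
    simp only [norm_zero]
    exact Set.indicator_nonneg (fun z _ => hB z) _

lemma ptb1 (f : SchwartzMap E2 ℂ) (j : Fin 2) (x : E2) (w : Fin 2 → ℝ) {Cf L : ℝ}
    (hCf : ∀ p q : E2, ‖f p - f q‖ ≤ Cf * ‖p - q‖)
    (hL : L = Cf + ‖f x‖ * (4 * (|w 0| + |w 1|) * (2 * ‖x‖ + 1))) :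
    ∀ z : E2, ‖z‖ ≤ 1 →
      ‖Krn j z * (gw f w (x - z) - gw f w x)‖ ≤ L * ‖z‖⁻¹ := by
  have hW : ∀ k : Fin 2, |w k| ≤ |w 0| + |w 1| := by
    intro k
    fin_cases k
    · simpa using le_add_of_nonneg_right (abs_nonneg (w 1))
    · simpa using le_add_of_nonneg_left (abs_nonneg (w 0))
  intro z hz
  rcases eq_or_ne z 0 with rfl | h0
  · simp [krn_zero]
  · have hnz : (0:ℝ) < ‖z‖ := norm_pos_iff.2 h0
    calc ‖Krn j z * (gw f w (x - z) - gw f w x)‖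
        = ‖Krn j z‖ * ‖gw f w (x - z) - gw f w x‖ := norm_mul _ _
      _ ≤ (‖z‖ ^ 2)⁻¹ * (L * ‖z‖) := by
          apply mul_le_mul (krn_norm_le j z) _ (norm_nonneg _) (by positivity)
          rw [hL]
          exact gw_diff_bound f w x hCf hW z hz
      _ = L * ‖z‖⁻¹ := by field_simp

lemma ptb2 (f : SchwartzMap E2 ℂ) (j : Fin 2) (x : E2) (w : Fin 2 → ℝ) :
    ∀ z : E2, z ∈ Souter → ‖Krn j z * gw f w (x - z)‖ ≤ ‖f (x - z)‖ := by
  intro z hz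
  have h1 : (1:ℝ) < ‖z‖ := hz
  calc ‖Krn j z * gw f w (x - z)‖ = ‖Krn j z‖ * ‖f (x - z)‖ := by rw [norm_mul, norm_gw]
    _ ≤ 1 * ‖f (x - z)‖ := by
        apply mul_le_mul_of_nonneg_right _ (norm_nonneg _)
        calc ‖Krn j z‖ ≤ (‖z‖ ^ 2)⁻¹ := krn_norm_le j z
          _ ≤ 1 := by
              rw [inv_le_one_iff₀]
              right
              nlinarith
    _ = ‖f (x - z)‖ := one_mul _

/-- The truncated integrals converge to `Phi` as `ε → 0⁺`. -/
lemma tendsto_trunc (f : SchwartzMap E2 ℂ) (j : Fin 2) (x : E2) (w : Fin 2 → ℝ) {Cf L : ℝ}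
    (hCf : ∀ p q : E2, ‖f p - f q‖ ≤ Cf * ‖p - q‖) (hCf0 : 0 ≤ Cf)
    (hL : L = Cf + ‖f x‖ * (4 * (|w 0| + |w 1|) * (2 * ‖x‖ + 1))) :
    Tendsto (truncRiesz j (gw f w) x) (𝓝[>] (0:ℝ)) (𝓝 (Phi f j x w)) := by
  have hL0 : 0 ≤ L := by
    rw [hL]
    apply add_nonneg hCf0 (by positivity)
  set P1 : E2 → ℂ := fun z => Krn j z * (gw f w (x - z) - gw f w x) with hP1
  set P2 : E2 → ℂ := fun z => Krn j z * gw f w (x - z) with hP2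
  set Fe : ℝ → E2 → ℂ := fun ε z => (Sann ε).indicator P1 z + Souter.indicator P2 z with hFe
  set F0 : E2 → ℂ := fun z => Sball.indicator P1 z + Souter.indicator P2 z with hF0
  have hIball : IntegrableOn P1 Sball volume := int_ball f j x w hCf hL
  have hIout : IntegrableOn P2 Souter volume :=
    int_out f j x w one_pos meas_souter souter_subset_sout
  have hind1 : Integrable (Sball.indicator P1) volume :=
    (integrable_indicator_iff meas_sball).2 hIball
  have hind2 : Integrable (Souter.indicator P2) volume :=
    (integrable_indicator_iff meas_souter).2 hIout
  -- the DCT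
  have hdct : Tendsto (fun ε => ∫ z, Fe ε z) (𝓝[>] (0:ℝ)) (𝓝 (∫ z, F0 z)) := by
    apply tendsto_integral_filter_of_dominated_convergence
      (bound := fun z => Sball.indicator (fun z => L * ‖z‖⁻¹) z
        + Souter.indicator (fun z => ‖f (x - z)‖) z)
    · filter_upwards with ε
      exact (((meas_i1 f j x w).indicator (meas_sann ε)).add
        ((meas_i2 f j x w).indicator meas_souter)).aestronglyMeasurable
    · filter_upwards [Ioo_mem_nhdsGT_of_mem (Set.mem_Ico.2 ⟨le_refl (0:ℝ), one_pos⟩)]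
        with ε hε
      filter_upwards with z
      calc ‖Fe ε z‖ ≤ ‖(Sann ε).indicator P1 z‖ + ‖Souter.indicator P2 z‖ := norm_add_le _ _
        _ ≤ Sball.indicator (fun z => L * ‖z‖⁻¹) z
            + Souter.indicator (fun z => ‖f (x - z)‖) z := by
          apply add_le_add
          · exact ind_bound (sann_subset_sball ε)
              (fun z hz => ptb1 f j x w hCf hL z hz.2)
              (fun z => by positivity) z
          · exact ind_bound (subset_refl _) (ptb2 f j x w)
              (fun z => norm_nonneg _) z
    · apply Integrable.add
      · exact (integrable_indicator_iff meas_sball).2 (integrableOn_inv_norm.const_mul L)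
      · exact (integrable_indicator_iff meas_souter).2
          ((f.integrable (μ := volume)).comp_sub_left x).norm.integrableOn
    · have h0 : ∀ᵐ z : E2 ∂volume, z ≠ 0 := by
        rw [ae_iff]
        have : {a : E2 | ¬ a ≠ 0} = {0} := by ext a; simp
        rw [this]
        exact measure_singleton 0
      filter_upwards [h0] with z hz
      have hnz : (0:ℝ) < ‖z‖ := norm_pos_iff.2 hz
      apply Tendsto.congr' _ (tendsto_const_nhds (x := F0 z))
      filter_upwards [Ioo_mem_nhdsGT_of_mem (Set.mem_Ico.2 ⟨le_refl (0:ℝ), hnz⟩)]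
        with ε hε
      have hmem : z ∈ Sann ε ↔ z ∈ Sball := by
        simp only [Sann, Sball, Set.mem_setOf_eq]
        exact ⟨fun h => h.2, fun h => ⟨le_of_lt hε.2, h⟩⟩
      have heq2 : (Sann ε).indicator P1 z = Sball.indicator P1 z := by
        by_cases h1 : z ∈ Sball
        · rw [Set.indicator_of_mem h1, Set.indicator_of_mem (hmem.2 h1)]
        · rw [Set.indicator_of_notMem h1,
            Set.indicator_of_notMem (fun h => h1 (hmem.1 h))]
      show F0 z = Fe ε z
      rw [hF0, hFe]
      simp only
      rw [heq2]
  -- identification of the two sides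
  have heq : ∀ᶠ ε in 𝓝[>] (0:ℝ), (fun ε => ∫ z, Fe ε z) ε = truncRiesz j (gw f w) x ε := by
    filter_upwards [Ioo_mem_nhdsGT_of_mem (Set.mem_Ico.2 ⟨le_refl (0:ℝ), one_pos⟩)]
      with ε hε
    rw [trunc_split f j x w hCf hL hε.1 (le_of_lt hε.2)]
    rw [hFe]
    simp only
    rw [integral_add ((integrable_indicator_iff (meas_sann ε)).2
        (hIball.mono_set (sann_subset_sball ε))) hind2,
      integral_indicator (meas_sann ε), integral_indicator meas_souter]
  have hphi : (∫ z, F0 z) = Phi f j x w := by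
    rw [hF0]
    simp only
    rw [integral_add hind1 hind2, integral_indicator meas_sball, integral_indicator meas_souter]
    rfl
  rw [← hphi]
  exact Tendsto.congr' heq hdct

lemma pv_eq (f : SchwartzMap E2 ℂ) (j : Fin 2) (x : E2) (w : Fin 2 → ℝ) {Cf L : ℝ}
    (hCf : ∀ p q : E2, ‖f p - f q‖ ≤ Cf * ‖p - q‖) (hCf0 : 0 ≤ Cf)
    (hL : L = Cf + ‖f x‖ * (4 * (|w 0| + |w 1|) * (2 * ‖x‖ + 1))) :
    pvRiesz j (gw f w) x = Phi f j x w :=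
  (tendsto_trunc f j x w hCf hCf0 hL).limUnder_eq

end LCAux
namespace LCAux

lemma chirp_cont_w (y : E2) : Continuous (fun w : Fin 2 → ℝ => chirp w y) := by
  apply Complex.continuous_exp.comp
  apply continuous_const.mul
  apply Complex.continuous_ofReal.comp
  apply continuous_finset_sum
  intro k _
  exact (continuous_apply k).mul continuous_const

lemma hball_event : ∀ᶠ w : Fin 2 → ℝ in 𝓝 0, ∀ k, |w k| ≤ 1 := by
  filter_upwards [Metric.closedBall_mem_nhds (0 : Fin 2 → ℝ) one_pos] with w hw k
  have hwn : ‖w‖ ≤ 1 := by simpa [Metric.mem_closedBall, dist_zero_right] using hw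
  calc |w k| = ‖w k‖ := (Real.norm_eq_abs _).symm
    _ ≤ ‖w‖ := norm_le_pi_norm w k
    _ ≤ 1 := hwn

/-- Continuity of `Phi` at `w = 0`. -/
lemma tendsto_phi (f : SchwartzMap E2 ℂ) (j : Fin 2) (x : E2) {Cf : ℝ}
    (hCf : ∀ p q : E2, ‖f p - f q‖ ≤ Cf * ‖p - q‖) (hCf0 : 0 ≤ Cf) :
    Tendsto (fun w : Fin 2 → ℝ => Phi f j x w) (𝓝 0) (𝓝 (Phi f j x 0)) := by
  set L₁ : ℝ := Cf + ‖f x‖ * (4 * 2 * (2 * ‖x‖ + 1)) with hL₁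
  have h1 : Tendsto (fun w : Fin 2 → ℝ =>
        ∫ z in Sball, Krn j z * (gw f w (x - z) - gw f w x)) (𝓝 0)
      (𝓝 (∫ z in Sball, Krn j z * (gw f (0 : Fin 2 → ℝ) (x - z) - gw f 0 x))) := by
    apply tendsto_integral_filter_of_dominated_convergence (bound := fun z => L₁ * ‖z‖⁻¹)
    · filter_upwards with w
      exact (meas_i1 f j x w).aestronglyMeasurable.restrict
    · filter_upwards [hball_event] with w hw
      rw [ae_restrict_iff' meas_sball]
      filter_upwards with z hz
      calc ‖Krn j z * (gw f w (x - z) - gw f w x)‖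
          ≤ (Cf + ‖f x‖ * (4 * (|w 0| + |w 1|) * (2 * ‖x‖ + 1))) * ‖z‖⁻¹ :=
            ptb1 f j x w hCf rfl z hz
        _ ≤ L₁ * ‖z‖⁻¹ := by
            apply mul_le_mul_of_nonneg_right _ (by positivity)
            rw [hL₁]
            have h0 := hw 0
            have h1 := hw 1
            gcongr
            linarith
    · exact integrableOn_inv_norm.const_mul L₁
    · filter_upwards with z
      have : Continuous fun w : Fin 2 → ℝ => Krn j z * (gw f w (x - z) - gw f w x) := by
        apply continuous_const.mul
        exact ((continuous_const.mul (chirp_cont_w (x - z))).sub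
          (continuous_const.mul (chirp_cont_w x)))
      exact this.tendsto 0
  have h2 : Tendsto (fun w : Fin 2 → ℝ =>
        ∫ z in Souter, Krn j z * gw f w (x - z)) (𝓝 0)
      (𝓝 (∫ z in Souter, Krn j z * gw f (0 : Fin 2 → ℝ) (x - z))) := by
    apply tendsto_integral_filter_of_dominated_convergence (bound := fun z => ‖f (x - z)‖)
    · filter_upwards with w
      exact (meas_i2 f j x w).aestronglyMeasurable.restrict
    · filter_upwards with w
      rw [ae_restrict_iff' meas_souter]
      filter_upwards with z hz
      exact ptb2 f j x w z hz
    · exact ((f.integrable (μ := volume)).comp_sub_left x).norm.integrableOn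
    · filter_upwards with z
      have : Continuous fun w : Fin 2 → ℝ => Krn j z * gw f w (x - z) :=
        continuous_const.mul (continuous_const.mul (chirp_cont_w (x - z)))
      exact this.tendsto 0
  exact h1.add h2

end LCAux

end

/-- In `ℝ²`, fix `j ∈ {1,2}` and nonzero reals `c₁, c₂`, and for
parameters `(ρ₁, ρ₂, a₁, a₂, d₁, d₂)` with `ρₖ cₖ ≠ 0` let `Aₖ = [[aₖ, ρₖ cₖ],[cₖ, dₖ]]`.
Then for every Schwartz `f` and every `x`, as `(ρ, a, d) → (-1, -1, 0, 0, 0, 0)`,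
`R_j^A f(x)` converges to the classical Riesz transform `R_j f(x)`. -/
theorem lcRiesz_tendsto_riesz_pointwise (c : Fin 2 → ℝ) (hc : ∀ k, c k ≠ 0) (j : Fin 2)
    (f : SchwartzMap (EuclideanSpace ℝ (Fin 2)) ℂ) (x : EuclideanSpace ℝ (Fin 2)) :
    Tendsto (fun q : LCParam =>
        lcRiesz q.2.1 (fun k => q.1 k * c k) q.2.2 j (⇑f) x)
      (𝓝[lcParamValid c] lcParamLimit)
      (𝓝 (rieszTrans j (⇑f) x)) := by
  obtain ⟨Cf, hCf0, hCf⟩ := LCAux.schwartz_lip f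
  have hpv : ∀ w : Fin 2 → ℝ,
      pvRiesz j (fun y => f y * chirp w y) x = LCAux.Phi f j x w := fun w =>
    LCAux.pv_eq f j x w hCf hCf0.le rfl
  have hpv0 : pvRiesz j (⇑f) x = LCAux.Phi f j x 0 := by
    have h := hpv 0
    have hfun : (fun y : LCAux.E2 => (f y : ℂ) * chirp (0 : Fin 2 → ℝ) y) = ⇑f := by
      funext y; rw [LCAux.chirp_zero, mul_one]
    rwa [hfun] at h
  have hrw : ∀ q : LCParam, lcRiesz q.2.1 (fun k => q.1 k * c k) q.2.2 j (⇑f) x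
      = (rieszConst 2 : ℂ)
        * chirp (fun k => -(q.2.2 k) / (2 * (q.1 k * c k))) x
        * LCAux.Phi f j x (fun k => q.2.1 k / (2 * (q.1 k * c k))) := by
    intro q
    simp only [lcRiesz]
    rw [hpv (fun k => q.2.1 k / (2 * (q.1 k * c k)))]
  have hden : ∀ k : Fin 2, Tendsto (fun q : LCParam => 2 * (q.1 k * c k))
      (𝓝 lcParamLimit) (𝓝 (2 * (-1 * c k))) := by
    intro k
    apply Tendsto.const_mul
    apply Tendsto.mul_const
    have hcont : Continuous fun q : LCParam => q.1 k := (continuous_apply k).comp continuous_fst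
    have h := hcont.tendsto lcParamLimit
    simpa [lcParamLimit] using h
  have hdnz : ∀ k : Fin 2, (2 : ℝ) * (-1 * c k) ≠ 0 := fun k => by simp [hc k]
  have hw1 : Tendsto (fun q : LCParam => (fun k => -(q.2.2 k) / (2 * (q.1 k * c k))))
      (𝓝 lcParamLimit) (𝓝 (0 : Fin 2 → ℝ)) := by
    rw [tendsto_pi_nhds]
    intro k
    have hnum : Tendsto (fun q : LCParam => -(q.2.2 k)) (𝓝 lcParamLimit) (𝓝 0) := by
      have hcont : Continuous fun q : LCParam => -(q.2.2 k) :=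
        ((continuous_apply k).comp (continuous_snd.comp continuous_snd)).neg
      have h := hcont.tendsto lcParamLimit
      simpa [lcParamLimit] using h
    have h := hnum.div (hden k) (hdnz k)
    rw [zero_div] at h; exact h
  have hw2 : Tendsto (fun q : LCParam => (fun k => q.2.1 k / (2 * (q.1 k * c k))))
      (𝓝 lcParamLimit) (𝓝 (0 : Fin 2 → ℝ)) := by
    rw [tendsto_pi_nhds]
    intro k
    have hnum : Tendsto (fun q : LCParam => q.2.1 k) (𝓝 lcParamLimit) (𝓝 0) := by
      have hcont : Continuous fun q : LCParam => q.2.1 k :=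
        (continuous_apply k).comp (continuous_fst.comp continuous_snd)
      have h := hcont.tendsto lcParamLimit
      simpa [lcParamLimit] using h
    have h := hnum.div (hden k) (hdnz k)
    rw [zero_div] at h; exact h
  have hchirp : Tendsto (fun q : LCParam =>
      chirp (fun k => -(q.2.2 k) / (2 * (q.1 k * c k))) x) (𝓝 lcParamLimit) (𝓝 1) := by
    have h := (LCAux.chirp_cont_w x).tendsto 0
    rw [LCAux.chirp_zero] at h
    exact h.comp hw1
  have hphi : Tendsto (fun q : LCParam =>
        LCAux.Phi f j x (fun k => q.2.1 k / (2 * (q.1 k * c k))))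
      (𝓝 lcParamLimit) (𝓝 (LCAux.Phi f j x 0)) :=
    (LCAux.tendsto_phi f j x hCf hCf0.le).comp hw2
  have hprod : Tendsto (fun q : LCParam =>
        (rieszConst 2 : ℂ)
          * chirp (fun k => -(q.2.2 k) / (2 * (q.1 k * c k))) x
          * LCAux.Phi f j x (fun k => q.2.1 k / (2 * (q.1 k * c k))))
      (𝓝 lcParamLimit) (𝓝 ((rieszConst 2 : ℂ) * 1 * LCAux.Phi f j x 0)) :=
    (tendsto_const_nhds.mul hchirp).mul hphi
  have hval : (rieszConst 2 : ℂ) * 1 * LCAux.Phi f j x 0 = rieszTrans j (⇑f) x := by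
    rw [mul_one, rieszTrans, hpv0]
  have hmain : Tendsto (fun q : LCParam =>
      lcRiesz q.2.1 (fun k => q.1 k * c k) q.2.2 j (⇑f) x)
      (𝓝 lcParamLimit) (𝓝 (rieszTrans j (⇑f) x)) := by
    rw [← hval]
    exact hprod.congr (fun q => (hrw q).symm)
  exact hmain.mono_left nhdsWithin_le_nhds
end
end

section
/- Work in ℝ², fix j ∈ {1,2} and nonzero reals c_1, c_2, and for parameters (ρ_1, ρ_2, a_1, a_2, d_1, d_2) with ρ_1 c_1 ≠ 0 and ρ_2 c_2 ≠ 0 let A = (A_1, A_2) with A_k = [[a_k, ρ_k c_k],[c_k, d_k]]. Then for all Schwartz functions f, φ : ℝ² → ℂ, as (ρ_1, ρ_2, a_1, a_2, d_1, d_2) → (−1, −1, 0, 0, 0, 0), the pairing ∫_{ℝ²} [R_j^A f(x) − R_j f(x)] φ(x) dx converges to 0; that is, R_j^A f converges to R_j f in the space of tempered distributions on ℝ². -/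
open MeasureTheory Filter Topology
open scoped Real ENNReal RealInnerProductSpace

section Aux

open Complex MeasureTheory Metric Set

local notation "E2" => EuclideanSpace ℝ (Fin 2)

lemma coord_abs_le_norm (u : E2) (k : Fin 2) : |u k| ≤ ‖u‖ := by
  rw [EuclideanSpace.norm_eq]
  simp only [Real.norm_eq_abs, sq_abs]
  rw [← Real.sqrt_sq_eq_abs]
  apply Real.sqrt_le_sqrt
  rw [← _root_.sq_abs (u k)]
  simpa [sq_abs] using Finset.single_le_sum (f := fun i => |u i| ^ 2) (fun i _ => sq_nonneg _)
    (Finset.mem_univ k)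

lemma norm_exp_I_mul (s : ℝ) : ‖Complex.exp (Complex.I * s)‖ = 1 := by
  rw [Complex.norm_exp]
  simp [Complex.mul_re]

lemma chirp_zero (y : E2) : chirp (0 : Fin 2 → ℝ) y = 1 := by
  simp [chirp]

lemma norm_chirp (w : Fin 2 → ℝ) (y : E2) : ‖chirp w y‖ = 1 :=
  norm_exp_I_mul _

lemma norm_exp_I_mul_sub_one (t : ℝ) : ‖Complex.exp (Complex.I * t) - 1‖ ≤ 2 * |t| := by
  rcases le_or_gt (|t|) 1 with h | h
  · have habs : ‖Complex.I * (t:ℂ)‖ = |t| := by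
      rw [norm_mul, Complex.norm_I, one_mul, Complex.norm_real, Real.norm_eq_abs]
    have := Complex.norm_exp_sub_one_le (x := Complex.I * (t:ℂ)) (by rw [habs]; exact h)
    rw [habs] at this
    exact this
  · calc ‖Complex.exp (Complex.I * t) - 1‖
        ≤ ‖Complex.exp (Complex.I * (t:ℂ))‖ + ‖(1:ℂ)‖ := norm_sub_le _ _
      _ = 2 := by rw [norm_exp_I_mul, norm_one]; norm_num
      _ ≤ 2 * |t| := by nlinarith

lemma norm_exp_I_sub_exp_I (a b : ℝ) :
    ‖Complex.exp (Complex.I * a) - Complex.exp (Complex.I * b)‖ ≤ 2 * |a - b| := by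
  have h1 : Complex.exp (Complex.I * a) - Complex.exp (Complex.I * b)
      = Complex.exp (Complex.I * b) * (Complex.exp (Complex.I * ((a - b : ℝ) : ℂ)) - 1) := by
    rw [mul_sub, ← Complex.exp_add, mul_one]
    push_cast
    ring_nf
  rw [h1, norm_mul, norm_exp_I_mul, one_mul]
  exact norm_exp_I_mul_sub_one (a - b)

lemma norm_chirp_sub_le (w : Fin 2 → ℝ) (u v : E2) :
    ‖chirp w u - chirp w v‖ ≤ 2 * ((∑ k, |w k|) * ((‖u‖ + ‖v‖) * ‖u - v‖)) := by
  have h := norm_exp_I_sub_exp_I (∑ k, w k * u k ^ 2) (∑ k, w k * v k ^ 2)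
  refine le_trans h ?_
  gcongr 2 * ?_
  have heq : (∑ k, w k * u k ^ 2) - (∑ k, w k * v k ^ 2)
      = ∑ k, w k * ((u k - v k) * (u k + v k)) := by
    rw [← Finset.sum_sub_distrib]
    congr 1; funext k; ring
  rw [heq]
  calc |∑ k, w k * ((u k - v k) * (u k + v k))|
      ≤ ∑ k, |w k * ((u k - v k) * (u k + v k))| := Finset.abs_sum_le_sum_abs _ _
    _ ≤ ∑ k, |w k| * ((‖u‖ + ‖v‖) * ‖u - v‖) := by
        apply Finset.sum_le_sum
        intro k _
        rw [abs_mul, abs_mul]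
        have h1 : |u k - v k| ≤ ‖u - v‖ := by
          have := coord_abs_le_norm (u - v) k
          simpa using this
        have h2 : |u k + v k| ≤ ‖u‖ + ‖v‖ :=
          (abs_add_le _ _).trans (add_le_add (coord_abs_le_norm u k) (coord_abs_le_norm v k))
        calc |w k| * (|u k - v k| * |u k + v k|)
            ≤ |w k| * (‖u - v‖ * (‖u‖ + ‖v‖)) := by
              apply mul_le_mul_of_nonneg_left _ (abs_nonneg _)
              exact mul_le_mul h1 h2 (abs_nonneg _) (norm_nonneg _)
          _ = |w k| * ((‖u‖ + ‖v‖) * ‖u - v‖) := by ring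
    _ = (∑ k, |w k|) * ((‖u‖ + ‖v‖) * ‖u - v‖) := by rw [← Finset.sum_mul]

end Aux
section Kernel

open Complex MeasureTheory Metric Set

local notation "E2" => EuclideanSpace ℝ (Fin 2)

/-- The Riesz kernel in dimension 2. -/
noncomputable def Krn (j : Fin 2) (z : E2) : ℂ := ((z j : ℝ) : ℂ) / ((‖z‖ : ℝ) : ℂ) ^ (3 : ℕ)

lemma Krn_measurable (j : Fin 2) : Measurable (Krn j) := by
  apply Measurable.div
  · exact (Complex.measurable_ofReal.comp ((PiLp.continuous_apply 2 _ j).measurable))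
  · exact ((Complex.measurable_ofReal.comp measurable_norm).pow_const _)

lemma Krn_neg (j : Fin 2) (z : E2) : Krn j (-z) = - Krn j z := by
  have h1 : (-z : E2) j = -(z j) := rfl
  simp [Krn, h1, neg_div]

lemma norm_Krn_le (j : Fin 2) (z : E2) : ‖Krn j z‖ ≤ (‖z‖ ^ 2)⁻¹ := by
  rcases eq_or_ne z 0 with rfl | hz
  · simp [Krn]
  · have hz' : (0:ℝ) < ‖z‖ := norm_pos_iff.mpr hz
    rw [Krn, norm_div, norm_pow]
    have h1 : ‖((z j : ℝ) : ℂ)‖ = |z j| := Complex.norm_real _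
    have h2 : ‖((‖z‖ : ℝ) : ℂ)‖ = ‖z‖ := by
      rw [Complex.norm_real, Real.norm_eq_abs, abs_of_pos hz']
    rw [h1, h2]
    rw [div_le_iff₀ (by positivity)]
    have := coord_abs_le_norm z j
    calc |z j| ≤ ‖z‖ := this
      _ = (‖z‖ ^ 2)⁻¹ * ‖z‖ ^ 3 := by field_simp
    
lemma norm_Krn_le_one (j : Fin 2) {z : E2} (hz : 1 ≤ ‖z‖) : ‖Krn j z‖ ≤ 1 := by
  refine (norm_Krn_le j z).trans ?_
  rw [inv_le_one_iff₀]
  right; nlinarith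

/-- `‖z‖⁻¹` is integrable on the unit ball of `ℝ²`. -/
lemma integrableOn_inv_norm_ball :
    IntegrableOn (fun z : E2 => ‖z‖⁻¹) (ball (0 : E2) 1) volume := by
  set ν : Measure E2 := volume.restrict (ball (0 : E2) 1) with hν
  have hmeas : Measurable fun z : E2 => ‖z‖⁻¹ := measurable_norm.inv
  constructor
  · exact hmeas.aestronglyMeasurable
  · rw [hasFiniteIntegral_iff_ofReal (Eventually.of_forall fun z => by positivity)]
    rw [lintegral_eq_lintegral_meas_le ν (Eventually.of_forall fun z => by positivity)
      hmeas.aemeasurable]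
    set mB := (volume : Measure E2) (ball (0:E2) 1) with hmB
    have hmBlt : mB < ⊤ := measure_ball_lt_top
    calc ∫⁻ t in Set.Ioi (0:ℝ), ν {a : E2 | t ≤ ‖a‖⁻¹}
        ≤ ∫⁻ t in Set.Ioc (0:ℝ) 1 ∪ Set.Ioi 1, ν {a : E2 | t ≤ ‖a‖⁻¹} :=
          lintegral_mono_set Set.Ioi_subset_Ioc_union_Ioi
      _ ≤ (∫⁻ t in Set.Ioc (0:ℝ) 1, ν {a : E2 | t ≤ ‖a‖⁻¹})
          + ∫⁻ t in Set.Ioi (1:ℝ), ν {a : E2 | t ≤ ‖a‖⁻¹} := lintegral_union_le _ _ _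
      _ < ⊤ := by
          refine ENNReal.add_lt_top.2 ⟨?_, ?_⟩
          · calc ∫⁻ t in Set.Ioc (0:ℝ) 1, ν {a : E2 | t ≤ ‖a‖⁻¹}
                ≤ ∫⁻ _ in Set.Ioc (0:ℝ) 1, mB := by
                  apply setLIntegral_mono' measurableSet_Ioc
                  intro t _
                  calc ν {a : E2 | t ≤ ‖a‖⁻¹} ≤ ν Set.univ := measure_mono (Set.subset_univ _)
                    _ = mB := by rw [hν, Measure.restrict_apply_univ]
              _ = mB * volume (Set.Ioc (0:ℝ) 1) := by rw [setLIntegral_const]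
              _ < ⊤ := by
                  apply ENNReal.mul_lt_top hmBlt
                  simp [Real.volume_Ioc]
          · have hsub : ∀ t : ℝ, 1 < t → ν {a : E2 | t ≤ ‖a‖⁻¹}
                ≤ ENNReal.ofReal ((t⁻¹) ^ 2) * mB := by
              intro t ht
              have ht0 : (0:ℝ) < t := lt_trans one_pos ht
              have hsubset : {a : E2 | t ≤ ‖a‖⁻¹} ⊆ closedBall (0:E2) t⁻¹ := by
                intro a ha
                simp only [Set.mem_setOf_eq] at ha
                rcases eq_or_ne a 0 with rfl | ha0
                · simp at ha; nlinarith [inv_nonneg.mpr (le_of_lt ht0)]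
                · have hna : (0:ℝ) < ‖a‖ := norm_pos_iff.mpr ha0
                  rw [mem_closedBall_zero_iff]
                  have : t ≤ ‖a‖⁻¹ := ha
                  calc ‖a‖ = (‖a‖⁻¹)⁻¹ := by rw [inv_inv]
                    _ ≤ t⁻¹ := by
                        apply inv_anti₀ ht0 this
              calc ν {a : E2 | t ≤ ‖a‖⁻¹} ≤ volume {a : E2 | t ≤ ‖a‖⁻¹} :=
                    Measure.restrict_le_self _
                _ ≤ volume (closedBall (0:E2) t⁻¹) := measure_mono hsubset
                _ = ENNReal.ofReal ((t⁻¹) ^ Module.finrank ℝ E2) * mB :=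
                    Measure.addHaar_closedBall _ _ (by positivity)
                _ = ENNReal.ofReal ((t⁻¹) ^ 2) * mB := by rw [finrank_euclideanSpace_fin]
            calc ∫⁻ t in Set.Ioi (1:ℝ), ν {a : E2 | t ≤ ‖a‖⁻¹}
                ≤ ∫⁻ t in Set.Ioi (1:ℝ), ENNReal.ofReal ((t⁻¹) ^ 2) * mB := by
                  apply setLIntegral_mono' measurableSet_Ioi
                  intro t ht
                  exact hsub t ht
              _ = (∫⁻ t in Set.Ioi (1:ℝ), ENNReal.ofReal ((t⁻¹) ^ 2)) * mB :=
                  lintegral_mul_const' _ _ hmBlt.ne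
              _ < ⊤ := by
                  apply ENNReal.mul_lt_top _ hmBlt
                  have hint : IntegrableOn (fun t : ℝ => t ^ (-2 : ℝ)) (Set.Ioi 1) volume :=
                    integrableOn_Ioi_rpow_of_lt (by norm_num) one_pos
                  have := hint.setLIntegral_lt_top
                  refine lt_of_eq_of_lt ?_ this
                  apply setLIntegral_congr_fun measurableSet_Ioi
                  intro t ht
                  show ENNReal.ofReal (t⁻¹ ^ 2) = ENNReal.ofReal (t ^ (-2:ℝ))
                  congr 1
                  rw [inv_pow, ← Real.rpow_natCast t 2,
                    ← Real.rpow_neg (le_of_lt (lt_trans one_pos ht))]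
                  norm_num

end Kernel
section Setup

open Complex MeasureTheory Metric Set Filter

local notation "E2" => EuclideanSpace ℝ (Fin 2)

/-- The chirped Schwartz function. -/
noncomputable def gw (f : SchwartzMap E2 ℂ) (w : Fin 2 → ℝ) (y : E2) : ℂ := f y * chirp w y

/-- The symmetrized kernel. -/
noncomputable def Hker (f : SchwartzMap E2 ℂ) (j : Fin 2) (w : Fin 2 → ℝ) (x z : E2) : ℂ :=
  Krn j z * (gw f w (x - z) - gw f w (x + z))

lemma continuous_chirp {w : Fin 2 → ℝ} : Continuous (chirp w) := by
  unfold chirp; fun_prop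

lemma continuous_gw {f : SchwartzMap E2 ℂ} {w : Fin 2 → ℝ} : Continuous (gw f w) :=
  f.continuous.mul continuous_chirp

lemma norm_gw (f : SchwartzMap E2 ℂ) (w : Fin 2 → ℝ) (y : E2) : ‖gw f w y‖ = ‖f y‖ := by
  rw [gw, norm_mul, norm_chirp, mul_one]

lemma exists_decay_bound (f : SchwartzMap E2 ℂ) :
    ∃ Cd : ℝ, 0 < Cd ∧ ∀ y : E2, ‖f y‖ ≤ Cd * ((1 + ‖y‖) ^ 4)⁻¹ := by
  obtain ⟨C4, hC4pos, hC4⟩ := f.decay 4 0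
  obtain ⟨C0, hC0pos, hC0⟩ := f.decay 0 0
  simp only [norm_iteratedFDeriv_zero] at hC4 hC0
  refine ⟨8 * (C0 + C4), by positivity, fun y => ?_⟩
  rw [← div_eq_mul_inv, le_div_iff₀ (by positivity)]
  have h2 : ‖f y‖ ≤ C0 := by simpa using hC0 y
  have h4 : ‖y‖ ^ 4 * ‖f y‖ ≤ C4 := hC4 y
  have hpoly : (1 + ‖y‖) ^ 4 ≤ 8 + 8 * ‖y‖ ^ 4 := by
    nlinarith [norm_nonneg y, sq_nonneg (‖y‖ - 1), sq_nonneg (‖y‖ ^ 2 - 1),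
      sq_nonneg (‖y‖ ^ 2 - ‖y‖), sq_nonneg (‖y‖ + 1)]
  calc ‖f y‖ * (1 + ‖y‖) ^ 4 ≤ ‖f y‖ * (8 + 8 * ‖y‖ ^ 4) := by
        exact mul_le_mul_of_nonneg_left hpoly (norm_nonneg _)
    _ = 8 * ‖f y‖ + 8 * (‖y‖ ^ 4 * ‖f y‖) := by ring
    _ ≤ 8 * C0 + 8 * C4 := by gcongr
    _ = 8 * (C0 + C4) := by ring

lemma exists_lip (f : SchwartzMap E2 ℂ) :
    ∃ L : ℝ, 0 < L ∧ ∀ u v : E2, ‖f u - f v‖ ≤ L * ‖u - v‖ := by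
  obtain ⟨C1, hC1pos, hC1⟩ := f.decay 0 1
  refine ⟨C1, hC1pos, fun u v => ?_⟩
  have hb : ∀ x : E2, ‖fderiv ℝ (⇑f) x‖ ≤ C1 := by
    intro x
    have h0 : ‖fderiv ℝ (⇑f) x‖ = ‖iteratedFDeriv ℝ 1 (⇑f) x‖ := by
      rw [← norm_iteratedFDeriv_fderiv (n := 0), norm_iteratedFDeriv_zero]
    rw [h0]
    simpa using hC1 x
  exact convex_univ.norm_image_sub_le_of_norm_fderiv_le
    (fun x _ => f.differentiable.differentiableAt) (fun x _ => hb x)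
    (Set.mem_univ v) (Set.mem_univ u)

lemma norm_gw_sub_le (f : SchwartzMap E2 ℂ) {L Cf : ℝ}
    (hL : ∀ u v : E2, ‖f u - f v‖ ≤ L * ‖u - v‖) (hCf : ∀ y : E2, ‖f y‖ ≤ Cf)
    (w : Fin 2 → ℝ) (u v : E2) :
    ‖gw f w u - gw f w v‖ ≤ (L + 2 * Cf * (∑ k, |w k|) * (‖u‖ + ‖v‖)) * ‖u - v‖ := by
  have hCf0 : 0 ≤ Cf := le_trans (norm_nonneg _) (hCf u)
  have hexp : gw f w u - gw f w v
      = (f u - f v) * chirp w u + f v * (chirp w u - chirp w v) := by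
    unfold gw; ring
  rw [hexp]
  calc ‖(f u - f v) * chirp w u + f v * (chirp w u - chirp w v)‖
      ≤ ‖(f u - f v) * chirp w u‖ + ‖f v * (chirp w u - chirp w v)‖ := norm_add_le _ _
    _ = ‖f u - f v‖ + ‖f v‖ * ‖chirp w u - chirp w v‖ := by
        rw [norm_mul, norm_mul, norm_chirp, mul_one]
    _ ≤ L * ‖u - v‖ + Cf * (2 * ((∑ k, |w k|) * ((‖u‖ + ‖v‖) * ‖u - v‖))) := by
        refine add_le_add (hL u v) ?_
        exact mul_le_mul (hCf v) (norm_chirp_sub_le w u v) (norm_nonneg _) hCf0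
    _ = (L + 2 * Cf * (∑ k, |w k|) * (‖u‖ + ‖v‖)) * ‖u - v‖ := by ring

/-- The dominating function. -/
noncomputable def Dom (Cd co : ℝ) (x z : E2) : ℝ :=
  (ball (0 : E2) 1).indicator (fun z => co * ‖z‖⁻¹) z
    + (Cd * ((1 + ‖x - z‖) ^ 4)⁻¹ + Cd * ((1 + ‖x + z‖) ^ 4)⁻¹)

lemma integrable_base_decay : Integrable (fun y : E2 => ((1 + ‖y‖) ^ 4)⁻¹) volume := by
  have h := integrable_one_add_norm (E := E2) (μ := volume) (r := 4)
    (by rw [finrank_euclideanSpace_fin]; norm_num)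
  have key : ∀ y : E2, (1 + ‖y‖) ^ (-(4:ℝ)) = ((1 + ‖y‖) ^ (4:ℕ))⁻¹ := fun y => by
    rw [Real.rpow_neg (by positivity), ← Real.rpow_natCast (1 + ‖y‖) 4]
    norm_num
  exact h.congr (Eventually.of_forall fun y => key y)

lemma Dom_nonneg {Cd co : ℝ} (hCd : 0 ≤ Cd) (hco : 0 ≤ co) (x z : E2) :
    0 ≤ Dom Cd co x z := by
  unfold Dom
  have h1 : 0 ≤ (ball (0 : E2) 1).indicator (fun z => co * ‖z‖⁻¹) z := by
    apply Set.indicator_nonneg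
    intro z _
    positivity
  positivity

lemma integrable_Dom (Cd co : ℝ) (x : E2) : Integrable (Dom Cd co x) volume := by
  unfold Dom
  refine Integrable.add ?_ (Integrable.add ?_ ?_)
  · exact IntegrableOn.integrable_indicator (integrableOn_inv_norm_ball.const_mul co) measurableSet_ball
  · exact (integrable_base_decay.comp_sub_left x).const_mul Cd
  · exact (integrable_base_decay.comp_add_left x).const_mul Cd

lemma Krn_zero (j : Fin 2) : Krn j (0 : E2) = 0 := by
  have : (0 : E2) j = 0 := rfl
  simp [Krn, this]

lemma norm_Hker_le (f : SchwartzMap E2 ℂ) (j : Fin 2) {L Cf Cd W : ℝ}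
    (hL : ∀ u v : E2, ‖f u - f v‖ ≤ L * ‖u - v‖) (hLpos : 0 ≤ L)
    (hCf : ∀ y : E2, ‖f y‖ ≤ Cf)
    (hCd : ∀ y : E2, ‖f y‖ ≤ Cd * ((1 + ‖y‖) ^ 4)⁻¹)
    {w : Fin 2 → ℝ} (hw : (∑ k, |w k|) ≤ W) (hW : 0 ≤ W) (x z : E2) :
    ‖Hker f j w x z‖ ≤ Dom Cd (2 * L + 8 * Cf * W * (‖x‖ + 1)) x z := by
  have hCf0 : 0 ≤ Cf := le_trans (norm_nonneg _) (hCf 0)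
  have hCd0 : 0 ≤ Cd := by
    have h0 := le_trans (norm_nonneg (f 0)) (hCd 0)
    simpa using h0
  have hco : 0 ≤ 2 * L + 8 * Cf * W * (‖x‖ + 1) := by positivity
  rcases eq_or_ne z 0 with rfl | hz0
  · rw [Hker, Krn_zero, zero_mul, norm_zero]
    exact Dom_nonneg hCd0 hco x 0
  rcases lt_or_ge ‖z‖ 1 with hz1 | hz1
  · -- near part
    have hzpos : (0 : ℝ) < ‖z‖ := norm_pos_iff.mpr hz0
    have hmem : z ∈ ball (0 : E2) 1 := by
      rw [mem_ball_zero_iff]; exact hz1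
    have hdiff : ‖gw f w (x - z) - gw f w (x + z)‖
        ≤ (L + 2 * Cf * (∑ k, |w k|) * (‖x - z‖ + ‖x + z‖)) * ‖(x - z) - (x + z)‖ :=
      norm_gw_sub_le f hL hCf w _ _
    have hsub : ‖(x - z) - (x + z)‖ = 2 * ‖z‖ := by
      have : (x - z) - (x + z) = -(z + z) := by abel
      rw [this, norm_neg]
      calc ‖z + z‖ = ‖(2 : ℝ) • z‖ := by rw [two_smul]
        _ = 2 * ‖z‖ := by rw [norm_smul]; simp
    have hnn : ‖x - z‖ + ‖x + z‖ ≤ 2 * (‖x‖ + 1) := by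
      have h1 : ‖x - z‖ ≤ ‖x‖ + ‖z‖ := norm_sub_le _ _
      have h2 : ‖x + z‖ ≤ ‖x‖ + ‖z‖ := norm_add_le _ _
      nlinarith [hz1]
    have hsum : (∑ k, |w k|) ≥ 0 := Finset.sum_nonneg fun k _ => abs_nonneg _
    have key : ‖Hker f j w x z‖
        ≤ (‖z‖ ^ 2)⁻¹ * ((L + 2 * Cf * W * (2 * (‖x‖ + 1))) * (2 * ‖z‖)) := by
      rw [Hker, norm_mul]
      apply mul_le_mul (norm_Krn_le j z) _ (norm_nonneg _) (by positivity)
      refine hdiff.trans ?_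
      rw [hsub]
      apply mul_le_mul _ le_rfl (by positivity) (by positivity)
      have : 2 * Cf * (∑ k, |w k|) * (‖x - z‖ + ‖x + z‖)
          ≤ 2 * Cf * W * (2 * (‖x‖ + 1)) := by
        apply mul_le_mul _ hnn (by positivity) (by positivity)
        apply mul_le_mul_of_nonneg_left hw (by positivity)
      linarith
    have keq : (‖z‖ ^ 2)⁻¹ * ((L + 2 * Cf * W * (2 * (‖x‖ + 1))) * (2 * ‖z‖))
        = (2 * L + 8 * Cf * W * (‖x‖ + 1)) * ‖z‖⁻¹ := by
      field_simp
      ring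
    rw [keq] at key
    refine key.trans ?_
    unfold Dom
    rw [Set.indicator_of_mem hmem]
    have : 0 ≤ Cd * ((1 + ‖x - z‖) ^ 4)⁻¹ + Cd * ((1 + ‖x + z‖) ^ 4)⁻¹ := by positivity
    linarith
  · -- far part
    have hmem : z ∉ ball (0 : E2) 1 := by
      rw [mem_ball_zero_iff]; exact not_lt.mpr hz1
    have key : ‖Hker f j w x z‖ ≤ ‖f (x - z)‖ + ‖f (x + z)‖ := by
      rw [Hker, norm_mul]
      calc ‖Krn j z‖ * ‖gw f w (x - z) - gw f w (x + z)‖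
          ≤ 1 * (‖gw f w (x - z)‖ + ‖gw f w (x + z)‖) := by
            apply mul_le_mul (norm_Krn_le_one j hz1) (norm_sub_le _ _) (norm_nonneg _)
              zero_le_one
        _ = ‖f (x - z)‖ + ‖f (x + z)‖ := by rw [one_mul, norm_gw, norm_gw]
    refine key.trans ?_
    unfold Dom
    rw [Set.indicator_of_notMem hmem]
    have h1 := hCd (x - z)
    have h2 := hCd (x + z)
    linarith

lemma aesm_Hker (f : SchwartzMap E2 ℂ) (j : Fin 2) (w : Fin 2 → ℝ) (x : E2) :
    AEStronglyMeasurable (Hker f j w x) volume := by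
  apply Measurable.aestronglyMeasurable
  apply (Krn_measurable j).mul
  apply Continuous.measurable
  exact (continuous_gw.comp (continuous_const.sub continuous_id)).sub
    (continuous_gw.comp (continuous_const.add continuous_id))

lemma integrable_Hker (f : SchwartzMap E2 ℂ) (j : Fin 2) (w : Fin 2 → ℝ) (x : E2) :
    Integrable (Hker f j w x) volume := by
  obtain ⟨Cd, hCdpos, hCd⟩ := exists_decay_bound f
  obtain ⟨L, hLpos, hL⟩ := exists_lip f
  obtain ⟨Cf, hCfpos, hCf'⟩ := f.decay 0 0
  simp only [norm_iteratedFDeriv_zero] at hCf'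
  have hCf : ∀ y : E2, ‖f y‖ ≤ Cf := fun y => by simpa using hCf' y
  refine (integrable_Dom Cd (2 * L + 8 * Cf * (∑ k, |w k|) * (‖x‖ + 1)) x).mono'
    (aesm_Hker f j w x) (Eventually.of_forall fun z => ?_)
  exact norm_Hker_le f j hL hLpos.le hCf hCd le_rfl
    (Finset.sum_nonneg fun k _ => abs_nonneg _) x z

end Setup
section TruncPV

open Complex MeasureTheory Metric Set Filter

local notation "E2" => EuclideanSpace ℝ (Fin 2)

lemma trunc_eq (f : SchwartzMap E2 ℂ) (j : Fin 2) (w : Fin 2 → ℝ) (x : E2) {ε : ℝ}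
    (hε : 0 < ε) :
    truncRiesz j (gw f w) x ε
      = (1/2 : ℂ) * ∫ z, ({z : E2 | ε ≤ ‖z‖}.indicator (Hker f j w x)) z := by
  obtain ⟨Cd, hCdpos, hCd⟩ := exists_decay_bound f
  have hS : MeasurableSet {y : E2 | ε ≤ ‖x - y‖} :=
    (isClosed_le continuous_const ((continuous_const.sub continuous_id).norm)).measurableSet
  have hS0 : MeasurableSet {z : E2 | ε ≤ ‖z‖} :=
    (isClosed_le continuous_const continuous_norm).measurableSet
  have hKb : ∀ z : E2, ε ≤ ‖z‖ → ‖Krn j z‖ ≤ (ε ^ 2)⁻¹ := by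
    intro z hz
    refine (norm_Krn_le j z).trans ?_
    have h2 : ε ^ 2 ≤ ‖z‖ ^ 2 := by nlinarith [hε.le]
    exact inv_anti₀ (by positivity) h2
  set P : E2 → ℂ :=
    fun z => ({z : E2 | ε ≤ ‖z‖}.indicator (fun z => Krn j z * gw f w (x - z)) z) with hP
  set Q : E2 → ℂ :=
    fun z => ({z : E2 | ε ≤ ‖z‖}.indicator (fun z => -(Krn j z * gw f w (x + z))) z) with hQ
  have hPmeas : AEStronglyMeasurable P volume := by
    apply AEStronglyMeasurable.indicator _ hS0
    apply Measurable.aestronglyMeasurable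
    exact (Krn_measurable j).mul
      (continuous_gw.comp (continuous_const.sub continuous_id)).measurable
  have hQmeas : AEStronglyMeasurable Q volume := by
    apply AEStronglyMeasurable.indicator _ hS0
    apply Measurable.aestronglyMeasurable
    exact ((Krn_measurable j).mul
      (continuous_gw.comp (continuous_const.add continuous_id)).measurable).neg
  have hPint : Integrable P volume := by
    refine ((integrable_base_decay.comp_sub_left x).const_mul ((ε ^ 2)⁻¹ * Cd)).mono'
      hPmeas (Eventually.of_forall fun z => ?_)
    by_cases hz : z ∈ {z : E2 | ε ≤ ‖z‖}
    · rw [hP]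
      simp only
      rw [Set.indicator_of_mem hz, norm_mul, norm_gw]
      calc ‖Krn j z‖ * ‖f (x - z)‖
          ≤ (ε ^ 2)⁻¹ * (Cd * ((1 + ‖x - z‖) ^ 4)⁻¹) :=
            mul_le_mul (hKb z hz) (hCd _) (norm_nonneg _) (by positivity)
        _ = (ε ^ 2)⁻¹ * Cd * ((1 + ‖x - z‖) ^ 4)⁻¹ := by ring
    · rw [hP]
      simp only
      rw [Set.indicator_of_notMem hz, norm_zero]
      positivity
  have hQint : Integrable Q volume := by
    refine ((integrable_base_decay.comp_add_left x).const_mul ((ε ^ 2)⁻¹ * Cd)).mono'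
      hQmeas (Eventually.of_forall fun z => ?_)
    by_cases hz : z ∈ {z : E2 | ε ≤ ‖z‖}
    · rw [hQ]
      simp only
      rw [Set.indicator_of_mem hz, norm_neg, norm_mul, norm_gw]
      calc ‖Krn j z‖ * ‖f (x + z)‖
          ≤ (ε ^ 2)⁻¹ * (Cd * ((1 + ‖x + z‖) ^ 4)⁻¹) :=
            mul_le_mul (hKb z hz) (hCd _) (norm_nonneg _) (by positivity)
        _ = (ε ^ 2)⁻¹ * Cd * ((1 + ‖x + z‖) ^ 4)⁻¹ := by ring
    · rw [hQ]
      simp only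
      rw [Set.indicator_of_notMem hz, norm_zero]
      positivity
  have eA : truncRiesz j (gw f w) x ε = ∫ z, P z := by
    rw [truncRiesz, ← integral_indicator hS,
      ← integral_sub_left_eq_self (fun y : E2 =>
        ({y : E2 | ε ≤ ‖x - y‖}.indicator
          (fun y => ((x j - y j : ℝ) : ℂ) / ((‖x - y‖ : ℝ) : ℂ) ^ (2 + 1) * gw f w y) y))
        volume x]
    congr 1
    funext z
    simp only
    by_cases hz : ε ≤ ‖z‖
    · have hz' : ‖x - (x - z)‖ = ‖z‖ := by rw [sub_sub_cancel]
      have hmem1 : x - z ∈ {y : E2 | ε ≤ ‖x - y‖} := by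
        simp only [Set.mem_setOf_eq, hz']; exact hz
      rw [Set.indicator_of_mem hmem1, hP]
      simp only [Set.indicator_of_mem (show z ∈ {z : E2 | ε ≤ ‖z‖} from hz)]
      have hcoord : x j - (x - z) j = z j := by
        have : (x - z) j = x j - z j := rfl
        rw [this]; ring
      rw [hcoord, hz', Krn]
    · have hz' : ‖x - (x - z)‖ = ‖z‖ := by rw [sub_sub_cancel]
      have hmem1 : x - z ∉ {y : E2 | ε ≤ ‖x - y‖} := by
        simp only [Set.mem_setOf_eq, hz']; exact hz
      rw [Set.indicator_of_notMem hmem1, hP]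
      simp only [Set.indicator_of_notMem (show z ∉ {z : E2 | ε ≤ ‖z‖} from hz)]
  have eB : truncRiesz j (gw f w) x ε = ∫ z, Q z := by
    rw [truncRiesz, ← integral_indicator hS,
      ← integral_add_left_eq_self (fun y : E2 =>
        ({y : E2 | ε ≤ ‖x - y‖}.indicator
          (fun y => ((x j - y j : ℝ) : ℂ) / ((‖x - y‖ : ℝ) : ℂ) ^ (2 + 1) * gw f w y) y)) x]
    congr 1
    funext z
    simp only
    have hxz : x - (x + z) = -z := by abel
    have hz' : ‖x - (x + z)‖ = ‖z‖ := by rw [hxz, norm_neg]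
    by_cases hz : ε ≤ ‖z‖
    · have hmem1 : x + z ∈ {y : E2 | ε ≤ ‖x - y‖} := by
        simp only [Set.mem_setOf_eq, hz']; exact hz
      rw [Set.indicator_of_mem hmem1, hQ]
      simp only [Set.indicator_of_mem (show z ∈ {z : E2 | ε ≤ ‖z‖} from hz)]
      have hcoord : x j - (x + z) j = (-z : E2) j := by
        have h1 : (x + z) j = x j + z j := rfl
        have h2 : (-z : E2) j = -(z j) := rfl
        rw [h1, h2]; ring
      rw [hcoord, hz']
      have : ((‖z‖ : ℝ) : ℂ) ^ (2 + 1) = ((‖z‖ : ℝ) : ℂ) ^ (3 : ℕ) := by norm_num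
      rw [this]
      have hK : (((-z : E2) j : ℝ) : ℂ) / ((‖z‖ : ℝ) : ℂ) ^ (3 : ℕ) = Krn j (-z) := by
        rw [Krn, norm_neg]
      rw [hK, Krn_neg]
      ring
    · have hmem1 : x + z ∉ {y : E2 | ε ≤ ‖x - y‖} := by
        simp only [Set.mem_setOf_eq, hz']; exact hz
      rw [Set.indicator_of_notMem hmem1, hQ]
      simp only [Set.indicator_of_notMem (show z ∉ {z : E2 | ε ≤ ‖z‖} from hz)]
  have eSum : ∫ z, ({z : E2 | ε ≤ ‖z‖}.indicator (Hker f j w x)) z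
      = (∫ z, P z) + ∫ z, Q z := by
    rw [← integral_add hPint hQint]
    congr 1
    funext z
    by_cases hz : z ∈ {z : E2 | ε ≤ ‖z‖}
    · rw [Set.indicator_of_mem hz, hP, hQ]
      simp only [Set.indicator_of_mem hz, Hker]
      ring
    · rw [Set.indicator_of_notMem hz, hP, hQ]
      simp only [Set.indicator_of_notMem hz, add_zero]
  rw [eSum, ← eA, ← eB]
  ring

end TruncPV
section PV

open Complex MeasureTheory Metric Set Filter

local notation "E2" => EuclideanSpace ℝ (Fin 2)

lemma ae_ne_zero : ∀ᵐ z : E2 ∂volume, z ≠ 0 := by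
  have hset : {z : E2 | ¬ z ≠ 0} = {0} := by ext z; simp
  rw [ae_iff, hset]
  exact measure_singleton 0

lemma pv_eq (f : SchwartzMap E2 ℂ) (j : Fin 2) (w : Fin 2 → ℝ) (x : E2) :
    pvRiesz j (gw f w) x = (1/2 : ℂ) * ∫ z, Hker f j w x z := by
  obtain ⟨Cd, hCdpos, hCd⟩ := exists_decay_bound f
  obtain ⟨L, hLpos, hL⟩ := exists_lip f
  obtain ⟨Cf, hCfpos, hCf'⟩ := f.decay 0 0
  simp only [norm_iteratedFDeriv_zero] at hCf'
  have hCf : ∀ y : E2, ‖f y‖ ≤ Cf := fun y => by simpa using hCf' y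
  set W : ℝ := ∑ k, |w k| with hW
  have hWnn : 0 ≤ W := Finset.sum_nonneg fun k _ => abs_nonneg _
  have hS0 : ∀ ε : ℝ, MeasurableSet {z : E2 | ε ≤ ‖z‖} := fun ε =>
    (isClosed_le continuous_const continuous_norm).measurableSet
  have key : Tendsto (fun ε : ℝ => ∫ z, ({z : E2 | ε ≤ ‖z‖}.indicator (Hker f j w x)) z)
      (𝓝[>] 0) (𝓝 (∫ z, Hker f j w x z)) := by
    apply tendsto_integral_filter_of_dominated_convergence
      (bound := Dom Cd (2 * L + 8 * Cf * W * (‖x‖ + 1)) x)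
    · exact Eventually.of_forall fun ε => (aesm_Hker f j w x).indicator (hS0 ε)
    · refine Eventually.of_forall fun ε => Eventually.of_forall fun z => ?_
      exact (norm_indicator_le_norm_self _ _).trans
        (norm_Hker_le f j hL hLpos.le hCf hCd le_rfl hWnn x z)
    · exact integrable_Dom _ _ x
    · filter_upwards [ae_ne_zero] with z hz
      have hzpos : 0 < ‖z‖ := norm_pos_iff.mpr hz
      have hmem : ∀ᶠ ε in 𝓝[>] (0:ℝ), ε < ‖z‖ :=
        mem_nhdsWithin_of_mem_nhds (Iio_mem_nhds hzpos)
      exact Tendsto.congr'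
        (by filter_upwards [hmem] with ε hε using
          (Set.indicator_of_mem (show z ∈ {z : E2 | ε ≤ ‖z‖} from le_of_lt hε) (Hker f j w x)).symm)
        tendsto_const_nhds
  have hev2 : ∀ᶠ ε in 𝓝[>] (0:ℝ),
      (1/2 : ℂ) * (∫ z, ({z : E2 | ε ≤ ‖z‖}.indicator (Hker f j w x)) z)
        = truncRiesz j (gw f w) x ε := by
    filter_upwards [self_mem_nhdsWithin] with ε hε
    exact (trunc_eq f j w x hε).symm
  exact Tendsto.limUnder_eq (Tendsto.congr' hev2 (key.const_mul (1/2 : ℂ)))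

/-- the two integral constants -/
noncomputable def kap1 : ℝ := ∫ z in ball (0 : E2) 1, ‖z‖⁻¹
noncomputable def kap2 : ℝ := ∫ y : E2, ((1 + ‖y‖) ^ 4)⁻¹

lemma kap1_nonneg : 0 ≤ kap1 := integral_nonneg fun z => by positivity
lemma kap2_nonneg : 0 ≤ kap2 := integral_nonneg fun z => by positivity

lemma integral_Dom_eq (Cd co : ℝ) (x : E2) :
    ∫ z, Dom Cd co x z = co * kap1 + 2 * (Cd * kap2) := by
  have h1 := IntegrableOn.integrable_indicator
    (integrableOn_inv_norm_ball.const_mul co) measurableSet_ball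
  have h2 := (integrable_base_decay.comp_sub_left x).const_mul Cd
  have h3 := (integrable_base_decay.comp_add_left x).const_mul Cd
  have h23 : Integrable (fun z : E2 =>
      Cd * ((1 + ‖x - z‖) ^ 4)⁻¹ + Cd * ((1 + ‖x + z‖) ^ 4)⁻¹) volume := h2.add h3
  unfold Dom
  rw [integral_add h1 h23, integral_add h2 h3,
    integral_indicator measurableSet_ball, integral_const_mul, integral_const_mul,
    integral_const_mul,
    integral_sub_left_eq_self (fun y : E2 => ((1 + ‖y‖) ^ 4)⁻¹) volume x,
    integral_add_left_eq_self (fun y : E2 => ((1 + ‖y‖) ^ 4)⁻¹) x]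
  show co * kap1 + (Cd * kap2 + Cd * kap2) = _
  ring

lemma pv_norm_le (f : SchwartzMap E2 ℂ) (j : Fin 2) {L Cf Cd W : ℝ}
    (hL : ∀ u v : E2, ‖f u - f v‖ ≤ L * ‖u - v‖) (hLpos : 0 ≤ L)
    (hCf : ∀ y : E2, ‖f y‖ ≤ Cf)
    (hCd : ∀ y : E2, ‖f y‖ ≤ Cd * ((1 + ‖y‖) ^ 4)⁻¹)
    {w : Fin 2 → ℝ} (hw : (∑ k, |w k|) ≤ W) (hW : 0 ≤ W) (x : E2) :
    ‖pvRiesz j (gw f w) x‖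
      ≤ (1/2) * ((2 * L + 8 * Cf * W * (‖x‖ + 1)) * kap1 + 2 * (Cd * kap2)) := by
  rw [pv_eq, norm_mul]
  have h12 : ‖(1/2 : ℂ)‖ = 1/2 := by norm_num
  rw [h12, ← integral_Dom_eq Cd (2 * L + 8 * Cf * W * (‖x‖ + 1)) x]
  have hnorm : ‖∫ z, Hker f j w x z‖ ≤ ∫ z, Dom Cd (2 * L + 8 * Cf * W * (‖x‖ + 1)) x z :=
    norm_integral_le_of_norm_le (integrable_Dom _ _ x)
      (Eventually.of_forall fun z => norm_Hker_le f j hL hLpos hCf hCd hw hW x z)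
  nlinarith [hnorm]

lemma rieszConst_pos : 0 < rieszConst 2 := by
  unfold rieszConst
  apply div_pos
  · apply Real.Gamma_pos_of_pos; norm_num
  · apply Real.rpow_pos_of_pos Real.pi_pos

end PV
section Main

open Complex MeasureTheory Metric Set Filter

local notation "E2" => EuclideanSpace ℝ (Fin 2)
local notation "P2" => ((Fin 2 → ℝ) × (Fin 2 → ℝ))

lemma norm_rieszConst_c : ‖((rieszConst 2 : ℝ) : ℂ)‖ = rieszConst 2 := by
  rw [Complex.norm_real, Real.norm_eq_abs, abs_of_pos rieszConst_pos]

lemma main_tendsto (j : Fin 2) (f φ : SchwartzMap E2 ℂ) :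
    Tendsto (fun p : P2 =>
        ∫ x : E2, (((rieszConst 2 : ℝ) : ℂ) * chirp p.2 x * pvRiesz j (gw f p.1) x
          - ((rieszConst 2 : ℝ) : ℂ) * pvRiesz j (gw f (0 : Fin 2 → ℝ)) x) * φ x)
      (𝓝 (0 : P2)) (𝓝 (0 : ℂ)) := by
  obtain ⟨Cd, hCdpos, hCd⟩ := exists_decay_bound f
  obtain ⟨L, hLpos, hL⟩ := exists_lip f
  obtain ⟨Cf, hCfpos, hCf'⟩ := f.decay 0 0
  simp only [norm_iteratedFDeriv_zero] at hCf'
  have hCf : ∀ y : E2, ‖f y‖ ≤ Cf := fun y => by simpa using hCf' y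
  have hCf0 : 0 ≤ Cf := le_trans (norm_nonneg _) (hCf 0)
  have hcR : 0 < rieszConst 2 := rieszConst_pos
  -- the eventual bound on the chirp parameters
  have hcontsum : Continuous fun p : P2 => ∑ k, |p.1 k| :=
    continuous_finset_sum _ fun k _ =>
      continuous_abs.comp ((continuous_apply k).comp continuous_fst)
  have h0sum : Tendsto (fun p : P2 => ∑ k, |p.1 k|) (𝓝 0) (𝓝 0) := by
    have := hcontsum.tendsto 0
    simpa using this
  have hW1 : ∀ᶠ p : P2 in 𝓝 0, (∑ k, |p.1 k|) ≤ 1 := by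
    filter_upwards [h0sum (Iio_mem_nhds (by norm_num : (0:ℝ) < 1))] with p hp
    exact le_of_lt hp
  -- strong measurability of the principal value
  have hsm : ∀ w : Fin 2 → ℝ,
      AEStronglyMeasurable (fun x : E2 => pvRiesz j (gw f w) x) volume := by
    intro w
    have hjoint : StronglyMeasurable (fun q : E2 × E2 => Hker f j w q.1 q.2) := by
      apply Measurable.stronglyMeasurable
      apply ((Krn_measurable j).comp measurable_snd).mul
      apply Continuous.measurable
      exact (continuous_gw.comp (continuous_fst.sub continuous_snd)).sub
        (continuous_gw.comp (continuous_fst.add continuous_snd))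
    have hsm2 : StronglyMeasurable (fun x : E2 => ∫ z, Hker f j w x z) :=
      hjoint.integral_prod_right'
    have heq : (fun x : E2 => pvRiesz j (gw f w) x)
        = fun x => (1/2 : ℂ) * ∫ z, Hker f j w x z := funext fun x => pv_eq f j w x
    rw [heq]
    exact (hsm2.const_mul _).aestronglyMeasurable
  -- the dominating function
  set B : E2 → ℝ := fun x =>
    rieszConst 2 * ((2 * L + 8 * Cf * 1 * (‖x‖ + 1)) * kap1 + 2 * (Cd * kap2)) * ‖φ x‖ with hB
  have hBint : Integrable B volume := by
    have he : B = fun x =>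
        (rieszConst 2 * ((2 * L + 8 * Cf) * kap1 + 2 * (Cd * kap2))) * ‖φ x‖
          + (rieszConst 2 * (8 * Cf * kap1)) * (‖x‖ ^ 1 * ‖φ x‖) := by
      funext x
      rw [hB]
      ring
    rw [he]
    exact ((φ.integrable.norm).const_mul _).add
      ((φ.integrable_pow_mul volume 1).const_mul _)
  have key := tendsto_integral_filter_of_dominated_convergence (μ := volume)
    (F := fun (p : P2) (x : E2) =>
      (((rieszConst 2 : ℝ) : ℂ) * chirp p.2 x * pvRiesz j (gw f p.1) x
        - ((rieszConst 2 : ℝ) : ℂ) * pvRiesz j (gw f (0 : Fin 2 → ℝ)) x) * φ x)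
    (f := fun _ : E2 => (0 : ℂ)) (l := 𝓝 (0 : P2)) B
    ?_ ?_ hBint ?_
  · simpa using key
  · -- measurability
    refine Eventually.of_forall fun p => ?_
    apply AEStronglyMeasurable.mul _ φ.continuous.aestronglyMeasurable
    apply AEStronglyMeasurable.sub
    · exact ((continuous_const.mul continuous_chirp).aestronglyMeasurable).mul (hsm p.1)
    · exact (hsm 0).const_mul _
  · -- bound
    filter_upwards [hW1] with p hp
    refine Eventually.of_forall fun x => ?_
    have hpv1 : ‖pvRiesz j (gw f p.1) x‖
        ≤ (1/2) * ((2 * L + 8 * Cf * 1 * (‖x‖ + 1)) * kap1 + 2 * (Cd * kap2)) :=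
      pv_norm_le f j hL hLpos.le hCf hCd hp zero_le_one x
    have hpv0 : ‖pvRiesz j (gw f (0 : Fin 2 → ℝ)) x‖
        ≤ (1/2) * ((2 * L + 8 * Cf * 1 * (‖x‖ + 1)) * kap1 + 2 * (Cd * kap2)) := by
      refine pv_norm_le f j hL hLpos.le hCf hCd ?_ zero_le_one x
      simp
    rw [norm_mul]
    have h1 : ‖((rieszConst 2 : ℝ) : ℂ) * chirp p.2 x * pvRiesz j (gw f p.1) x
        - ((rieszConst 2 : ℝ) : ℂ) * pvRiesz j (gw f (0 : Fin 2 → ℝ)) x‖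
        ≤ rieszConst 2 * ‖pvRiesz j (gw f p.1) x‖
          + rieszConst 2 * ‖pvRiesz j (gw f (0 : Fin 2 → ℝ)) x‖ := by
      refine (norm_sub_le _ _).trans ?_
      rw [norm_mul, norm_mul, norm_mul, norm_rieszConst_c, norm_chirp, mul_one]
    rw [hB]
    calc ‖((rieszConst 2 : ℝ) : ℂ) * chirp p.2 x * pvRiesz j (gw f p.1) x
          - ((rieszConst 2 : ℝ) : ℂ) * pvRiesz j (gw f (0 : Fin 2 → ℝ)) x‖ * ‖φ x‖
        ≤ (rieszConst 2 * ((1/2) * ((2 * L + 8 * Cf * 1 * (‖x‖ + 1)) * kap1 + 2 * (Cd * kap2)))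
            + rieszConst 2 * ((1/2) * ((2 * L + 8 * Cf * 1 * (‖x‖ + 1)) * kap1
              + 2 * (Cd * kap2)))) * ‖φ x‖ := by
          apply mul_le_mul_of_nonneg_right _ (norm_nonneg _)
          refine h1.trans ?_
          have hb1 := mul_le_mul_of_nonneg_left hpv1 hcR.le
          have hb0 := mul_le_mul_of_nonneg_left hpv0 hcR.le
          linarith
      _ = rieszConst 2 * ((2 * L + 8 * Cf * 1 * (‖x‖ + 1)) * kap1 + 2 * (Cd * kap2)) * ‖φ x‖ := by
          ring
  · -- pointwise limit
    refine Eventually.of_forall fun x => ?_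
    have hPcont : Tendsto (fun p : P2 => ∫ z, Hker f j p.1 x z) (𝓝 0)
        (𝓝 (∫ z, Hker f j (0 : Fin 2 → ℝ) x z)) := by
      apply tendsto_integral_filter_of_dominated_convergence
        (bound := Dom Cd (2 * L + 8 * Cf * 1 * (‖x‖ + 1)) x)
      · exact Eventually.of_forall fun p => aesm_Hker f j p.1 x
      · filter_upwards [hW1] with p hp
        exact Eventually.of_forall fun z =>
          norm_Hker_le f j hL hLpos.le hCf hCd hp zero_le_one x z
      · exact integrable_Dom _ _ x
      · refine Eventually.of_forall fun z => ?_
        have hcontH : Continuous fun p : P2 => Hker f j p.1 x z := by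
          unfold Hker gw chirp
          fun_prop
        exact hcontH.tendsto 0
    have hChirp : Tendsto (fun p : P2 => chirp p.2 x) (𝓝 0) (𝓝 1) := by
      have hc : Continuous fun p : P2 => chirp p.2 x := by
        unfold chirp
        fun_prop
      have h0 : chirp ((0 : P2).2) x = 1 := chirp_zero x
      have := hc.tendsto 0
      rwa [h0] at this
    have hT : Tendsto (fun p : P2 =>
        (((rieszConst 2 : ℝ) : ℂ) * chirp p.2 x * ((1/2 : ℂ) * ∫ z, Hker f j p.1 x z)
          - ((rieszConst 2 : ℝ) : ℂ) * ((1/2 : ℂ) * ∫ z, Hker f j (0 : Fin 2 → ℝ) x z)) * φ x)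
        (𝓝 0)
        (𝓝 ((((rieszConst 2 : ℝ) : ℂ) * 1 * ((1/2 : ℂ) * ∫ z, Hker f j (0 : Fin 2 → ℝ) x z)
          - ((rieszConst 2 : ℝ) : ℂ) * ((1/2 : ℂ) * ∫ z, Hker f j (0 : Fin 2 → ℝ) x z)) * φ x)) := by
      apply Tendsto.mul_const
      apply Tendsto.sub _ tendsto_const_nhds
      exact (tendsto_const_nhds.mul hChirp).mul (hPcont.const_mul (1/2 : ℂ))
    have hzero : (((rieszConst 2 : ℝ) : ℂ) * 1 * ((1/2 : ℂ) * ∫ z, Hker f j (0 : Fin 2 → ℝ) x z)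
        - ((rieszConst 2 : ℝ) : ℂ) * ((1/2 : ℂ) * ∫ z, Hker f j (0 : Fin 2 → ℝ) x z)) * φ x
        = 0 := by ring
    rw [hzero] at hT
    have heq : (fun p : P2 =>
        (((rieszConst 2 : ℝ) : ℂ) * chirp p.2 x * pvRiesz j (gw f p.1) x
          - ((rieszConst 2 : ℝ) : ℂ) * pvRiesz j (gw f (0 : Fin 2 → ℝ)) x) * φ x)
        = fun p : P2 =>
        (((rieszConst 2 : ℝ) : ℂ) * chirp p.2 x * ((1/2 : ℂ) * ∫ z, Hker f j p.1 x z)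
          - ((rieszConst 2 : ℝ) : ℂ) * ((1/2 : ℂ) * ∫ z, Hker f j (0 : Fin 2 → ℝ) x z)) * φ x := by
      funext p
      rw [pv_eq, pv_eq]
    rw [heq]
    exact hT

end Main
section Final

open Complex MeasureTheory Metric Set Filter

local notation "E2" => EuclideanSpace ℝ (Fin 2)
local notation "P2" => ((Fin 2 → ℝ) × (Fin 2 → ℝ))

/-- In `ℝ²`, fix `j ∈ {1,2}` and nonzero reals `c₁, c₂`, and for
parameters `(ρ₁, ρ₂, a₁, a₂, d₁, d₂)` with `ρₖ cₖ ≠ 0` let `Aₖ = [[aₖ, ρₖ cₖ],[cₖ, dₖ]]`.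
Then for all Schwartz `f, φ`, as `(ρ, a, d) → (-1, -1, 0, 0, 0, 0)`, the pairing
`∫ (R_j^A f − R_j f) φ` converges to `0`; that is, `R_j^A f → R_j f` as tempered
distributions on `ℝ²`. -/
theorem lcRiesz_tendsto_riesz_distribution (c : Fin 2 → ℝ) (hc : ∀ k, c k ≠ 0) (j : Fin 2)
    (f φ : SchwartzMap (EuclideanSpace ℝ (Fin 2)) ℂ) :
    Tendsto (fun q : LCParam =>
        ∫ x : EuclideanSpace ℝ (Fin 2),
          (lcRiesz q.2.1 (fun k => q.1 k * c k) q.2.2 j (⇑f) x -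
            rieszTrans j (⇑f) x) * φ x)
      (𝓝[lcParamValid c] lcParamLimit)
      (𝓝 (0 : ℂ)) := by
  set Φ : LCParam → P2 := fun q =>
    (fun k => q.2.1 k / (2 * (q.1 k * c k)), fun k => -(q.2.2 k) / (2 * (q.1 k * c k)))
    with hΦdef
  have hΦcont : ContinuousAt Φ lcParamLimit := by
    rw [hΦdef]
    apply ContinuousAt.prodMk
    · apply continuousAt_pi.2
      intro k
      apply ContinuousAt.div
      · exact ((continuous_apply k).comp (continuous_fst.comp continuous_snd)).continuousAt
      · exact (continuous_const.mul (((continuous_apply k).comp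
          continuous_fst).mul continuous_const)).continuousAt
      · show (2 : ℝ) * (lcParamLimit.1 k * c k) ≠ 0
        have h1 : lcParamLimit.1 k = -1 := rfl
        rw [h1]
        simp only [neg_one_mul, mul_neg]
        intro hcon
        apply hc k
        have := neg_eq_zero.mp hcon
        linarith [mul_ne_zero (two_ne_zero (α := ℝ)) (hc k)]
    · apply continuousAt_pi.2
      intro k
      apply ContinuousAt.div
      · exact (((continuous_apply k).comp (continuous_snd.comp continuous_snd)).neg).continuousAt
      · exact (continuous_const.mul (((continuous_apply k).comp
          continuous_fst).mul continuous_const)).continuousAt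
      · show (2 : ℝ) * (lcParamLimit.1 k * c k) ≠ 0
        have h1 : lcParamLimit.1 k = -1 := rfl
        rw [h1]
        intro hcon
        apply hc k
        nlinarith [hcon]
  have hΦ0 : Φ lcParamLimit = 0 := by
    rw [hΦdef]
    refine Prod.ext ?_ ?_
    · funext k
      have h2 : lcParamLimit.2.1 k = 0 := rfl
      show lcParamLimit.2.1 k / (2 * (lcParamLimit.1 k * c k)) = 0
      rw [h2, zero_div]
    · funext k
      have h2 : lcParamLimit.2.2 k = 0 := rfl
      show -(lcParamLimit.2.2 k) / (2 * (lcParamLimit.1 k * c k)) = 0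
      rw [h2, neg_zero, zero_div]
  have hΦtend : Tendsto Φ (𝓝[lcParamValid c] lcParamLimit) (𝓝 (0 : P2)) := by
    have h := hΦcont.tendsto
    rw [hΦ0] at h
    exact h.mono_left nhdsWithin_le_nhds
  have hmain := main_tendsto j f φ
  have hcomp := hmain.comp hΦtend
  have hgw0 : gw f (0 : Fin 2 → ℝ) = ⇑f := funext fun y => by rw [gw, chirp_zero, mul_one]
  refine Tendsto.congr (fun q => ?_) hcomp
  show ∫ x : E2, (((rieszConst 2 : ℝ) : ℂ) * chirp (Φ q).2 x * pvRiesz j (gw f (Φ q).1) x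
      - ((rieszConst 2 : ℝ) : ℂ) * pvRiesz j (gw f (0 : Fin 2 → ℝ)) x) * φ x
    = ∫ x : E2, (lcRiesz q.2.1 (fun k => q.1 k * c k) q.2.2 j (⇑f) x
      - rieszTrans j (⇑f) x) * φ x
  apply integral_congr_ae
  apply Eventually.of_forall
  intro x
  unfold lcRiesz rieszTrans
  rw [hgw0]
  rfl

end Final
end
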